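/- arXiv:2302.12755 — 5 statements merged into one kernel-verified Lean document; each statement's English description precedes it below -/
import Mathlib

section
/- For every ε ∈ [0, 1) there exists a function φ ∈ BMO_ε([0,1]) with ⟨φ⟩_{[0,1]} = 0 such that ⟨exp|φ|⟩_{[0,1]} = e^ε if 0 ≤ ε ≤ 1/2, and ⟨exp|φ|⟩_{[0,1]} = e^{1−ε}/(2 − 2ε) if 1/2 ≤ ε < 1; i.e., the sharp symmetric integral John–Nirenberg inequality is attained. -/
open MeasureTheory Real

/-- The average of `φ` over the interval `[a, b]`. -/
noncomputable def intervalAvg (a b : ℝ) (φ : ℝ → ℝ) : ℝ :=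
  (b - a)⁻¹ * ∫ t in a..b, φ t

/-- `φ` belongs to the `ε`-ball of `BMO([a,b])` (with the `L²`-based seminorm):
`φ` is in `L²([a,b])` and the mean square oscillation over every subinterval is at most `ε²`. -/
def MemBMO (ε a b : ℝ) (φ : ℝ → ℝ) : Prop :=
  MeasureTheory.IntegrableOn φ (Set.Icc a b) ∧
  MeasureTheory.IntegrableOn (fun t => (φ t) ^ 2) (Set.Icc a b) ∧
  ∀ c d : ℝ, a ≤ c → c < d → d ≤ b →
    intervalAvg c d (fun t => (φ t - intervalAvg c d φ) ^ 2) ≤ ε ^ 2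

/-- The Bellman function `𝔹_ε(x₁, x₂)` for the symmetric integral John–Nirenberg inequality. -/
noncomputable def bellman (ε x₁ x₂ : ℝ) : ℝ :=
  sSup { y : ℝ | ∃ φ : ℝ → ℝ, MemBMO ε 0 1 φ ∧
    intervalAvg 0 1 φ = x₁ ∧ intervalAvg 0 1 (fun t => (φ t) ^ 2) = x₂ ∧
    y = intervalAvg 0 1 (fun t => Real.exp |φ t|) }

open intervalIntegral

lemma JNlog_bound {t : ℝ} (ht : t ∈ Set.Ioc (0:ℝ) 1) : |Real.log t| ≤ 4 * t ^ (-(1/4) : ℝ) := by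
  obtain ⟨ht0, ht1⟩ := ht
  have hlt : Real.log t ≤ 0 := Real.log_nonpos ht0.le ht1
  rw [abs_of_nonpos hlt]
  have hz : (0:ℝ) < t⁻¹ := by positivity
  have h1 : -Real.log t = Real.log t⁻¹ := by rw [Real.log_inv]
  have h2 : Real.log t⁻¹ = 4 * Real.log (t⁻¹ ^ ((1:ℝ)/4)) := by
    rw [Real.log_rpow hz]; ring
  have h3 : Real.log (t⁻¹ ^ ((1:ℝ)/4)) ≤ t⁻¹ ^ ((1:ℝ)/4) - 1 :=
    Real.log_le_sub_one_of_pos (by positivity)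
  have h4 : t⁻¹ ^ ((1:ℝ)/4) = t ^ (-(1/4) : ℝ) := by
    rw [Real.inv_rpow ht0.le, ← Real.rpow_neg ht0.le]
  rw [h1, h2, h4]
  rw [h4] at h3
  linarith

lemma JNint_rpow (r : ℝ) (hr : -1 < r) (s b : ℝ) (hsb : s ≤ b) :
    IntegrableOn (fun t => t ^ r) (Set.Ioc s b) := by
  have := intervalIntegral.intervalIntegrable_rpow' (a := s) (b := b) hr
  rwa [intervalIntegrable_iff_integrableOn_Ioc_of_le hsb] at this

lemma JNil_log : IntegrableOn Real.log (Set.Ioc (0:ℝ) 1) := by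
  apply Integrable.mono ((JNint_rpow (-(1/4)) (by norm_num) 0 1 (by norm_num)).const_mul 4)
    (Real.measurable_log.aestronglyMeasurable)
  rw [ae_restrict_iff' measurableSet_Ioc]
  filter_upwards with t ht
  have hb := JNlog_bound ht
  have h5 : (0:ℝ) < t ^ (-(1/4):ℝ) := Real.rpow_pos_of_pos ht.1 _
  simp only [Real.norm_eq_abs]
  rw [abs_of_pos (mul_pos (by norm_num) h5)]
  exact hb

lemma JNil_log2 : IntegrableOn (fun t => (Real.log t)^2) (Set.Ioc (0:ℝ) 1) := by
  apply Integrable.mono ((JNint_rpow (-(1/2)) (by norm_num) 0 1 (by norm_num)).const_mul 16)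
    ((Real.measurable_log.pow_const 2).aestronglyMeasurable)
  rw [ae_restrict_iff' measurableSet_Ioc]
  filter_upwards with t ht
  have hb := JNlog_bound ht
  have h5 : (0:ℝ) < t ^ (-(1/4):ℝ) := Real.rpow_pos_of_pos ht.1 _
  have h6 : (t ^ (-(1/4):ℝ))^2 = t ^ (-(1/2):ℝ) := by
    rw [← Real.rpow_natCast (t ^ (-(1/4):ℝ)) 2, ← Real.rpow_mul ht.1.le]
    norm_num
  have h7 : (0:ℝ) < t ^ (-(1/2):ℝ) := Real.rpow_pos_of_pos ht.1 _
  simp only [Real.norm_eq_abs]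
  rw [abs_of_nonneg (sq_nonneg (Real.log t)), abs_of_pos (mul_pos (by norm_num) h7)]
  nlinarith [sq_abs (Real.log t), abs_nonneg (Real.log t)]

lemma JNII_log {s b : ℝ} (hs : 0 ≤ s) (hsb : s ≤ b) (hb : b ≤ 1) :
    IntervalIntegrable Real.log volume s b := by
  rw [intervalIntegrable_iff_integrableOn_Ioc_of_le hsb]
  exact JNil_log.mono_set (Set.Ioc_subset_Ioc hs hb)

lemma JNII_log2 {s b : ℝ} (hs : 0 ≤ s) (hsb : s ≤ b) (hb : b ≤ 1) :
    IntervalIntegrable (fun t => (Real.log t)^2) volume s b := by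
  rw [intervalIntegrable_iff_integrableOn_Ioc_of_le hsb]
  exact JNil_log2.mono_set (Set.Ioc_subset_Ioc hs hb)

lemma JNint_log {s b : ℝ} (hs : 0 ≤ s) (hsb : s ≤ b) (hb : b ≤ 1) :
    ∫ t in s..b, Real.log t = (b * Real.log b - b) - (s * Real.log s - s) := by
  have key := intervalIntegral.integral_eq_sub_of_hasDeriv_right_of_le hsb
    (f := fun t => t * Real.log t - t) (f' := Real.log)
    ((Real.continuous_mul_log.sub continuous_id).continuousOn)
    (fun x hx => by
      have hx0 : x ≠ 0 := (lt_of_le_of_lt hs hx.1).ne'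
      have h := (Real.hasDerivAt_mul_log hx0).sub (hasDerivAt_id x)
      have h2 : Real.log x + 1 - 1 = Real.log x := by ring
      rw [h2] at h
      exact h.hasDerivWithinAt)
    (JNII_log hs hsb hb)
  rw [key]

lemma JNcont_mul_log_sq : ContinuousOn (fun t => t * (Real.log t)^2) (Set.Ici (0:ℝ)) := by
  have hc : Continuous (fun t : ℝ => 4 * (Real.sqrt t * Real.log (Real.sqrt t))^2) := by
    have h := Real.continuous_mul_log.comp Real.continuous_sqrt
    exact continuous_const.mul (h.pow 2)
  apply hc.continuousOn.congr
  intro t ht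
  simp only [Set.mem_Ici] at ht
  show t * (Real.log t)^2 = 4 * (Real.sqrt t * Real.log (Real.sqrt t))^2
  rcases eq_or_lt_of_le ht with h | h
  · simp [← h]
  · have hs : Real.sqrt t ^ 2 = t := Real.sq_sqrt ht
    have hl : Real.log (Real.sqrt t) = Real.log t / 2 := Real.log_sqrt ht
    rw [hl]; nlinarith [hs]

lemma JNint_log2 {s b : ℝ} (hs : 0 ≤ s) (hsb : s ≤ b) (hb : b ≤ 1) :
    ∫ t in s..b, (Real.log t)^2 =
      (b * (Real.log b)^2 - 2*(b * Real.log b) + 2*b) -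
      (s * (Real.log s)^2 - 2*(s * Real.log s) + 2*s) := by
  have key := intervalIntegral.integral_eq_sub_of_hasDeriv_right_of_le hsb
    (f := fun t => t * (Real.log t)^2 - 2*(t * Real.log t) + 2*t)
    (f' := fun t => (Real.log t)^2)
    (((JNcont_mul_log_sq.mono (fun x hx => le_trans hs hx.1)).sub
      ((continuous_const.mul Real.continuous_mul_log).continuousOn)).add
      ((continuous_const.mul continuous_id).continuousOn))
    (fun x hx => by
      have hx0 : (0:ℝ) < x := lt_of_le_of_lt hs hx.1
      have d1 : HasDerivAt (fun t : ℝ => t * (Real.log t)^2)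
          ((Real.log x + 1) * Real.log x + (x * Real.log x) * x⁻¹) x := by
        have h1 := (Real.hasDerivAt_mul_log hx0.ne').mul (Real.hasDerivAt_log hx0.ne')
        have he : (fun t : ℝ => t * Real.log t * Real.log t) = fun t : ℝ => t * (Real.log t)^2 := by
          funext t; ring
        rw [← he]
        exact h1
      have d2 := (d1.sub ((Real.hasDerivAt_mul_log hx0.ne').const_mul 2)).add
        ((hasDerivAt_id x).const_mul 2)
      have he2 : (Real.log x + 1) * Real.log x + (x * Real.log x) * x⁻¹ -
          2 * (Real.log x + 1) + 2 * 1 = (Real.log x)^2 := by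
        field_simp
        ring
      rw [he2] at d2
      exact d2.hasDerivWithinAt)
    (JNII_log2 hs hsb hb)
  rw [key]

noncomputable def JNh (δ ε u : ℝ) : ℝ → ℝ :=
  fun t => δ + ε * max 0 (Real.log u - Real.log t)

lemma JNh_meas (δ ε u : ℝ) : Measurable (JNh δ ε u) :=
  measurable_const.add ((measurable_const.max (measurable_const.sub Real.measurable_log)).const_mul ε)

lemma JNh_nonneg {δ ε u : ℝ} (hδ : 0 ≤ δ) (hε : 0 ≤ ε) (t : ℝ) : 0 ≤ JNh δ ε u t := by
  have h1 : (0:ℝ) ≤ max 0 (Real.log u - Real.log t) := le_max_left _ _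
  have := mul_nonneg hε h1
  simp only [JNh]; linarith

lemma JNh_le {δ ε u : ℝ} (hε : 0 ≤ ε) (t : ℝ) :
    JNh δ ε u t ≤ δ + ε * (|Real.log u| + |Real.log t|) := by
  have h1 : max 0 (Real.log u - Real.log t) ≤ |Real.log u| + |Real.log t| := by
    apply max_le (by positivity)
    have h2 := le_abs_self (Real.log u)
    have h3 := neg_abs_le (Real.log t)
    linarith
  have := mul_le_mul_of_nonneg_left h1 hε
  simp only [JNh]; linarith

lemma JNII_h {δ ε u s b : ℝ} (hδ : 0 ≤ δ) (hε : 0 ≤ ε) (hs : 0 ≤ s) (hsb : s ≤ b) (hb : b ≤ 1) :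
    IntervalIntegrable (JNh δ ε u) volume s b := by
  rw [intervalIntegrable_iff_integrableOn_Ioc_of_le hsb]
  have hla : IntegrableOn (fun t => |Real.log t|) (Set.Ioc s b) :=
    ((intervalIntegrable_iff_integrableOn_Ioc_of_le hsb).1 (JNII_log hs hsb hb)).abs
  have hg : IntegrableOn (fun t => δ + ε * (|Real.log u| + |Real.log t|)) (Set.Ioc s b) := by
    exact (integrableOn_const measure_Ioc_lt_top.ne).add
      (((integrableOn_const measure_Ioc_lt_top.ne).add hla).const_mul ε)
  apply hg.mono' ((JNh_meas δ ε u).aestronglyMeasurable)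
  apply ae_of_all
  intro t
  rw [Real.norm_eq_abs, abs_of_nonneg (JNh_nonneg hδ hε t)]
  exact JNh_le hε t

lemma JNII_h2 {δ ε u s b : ℝ} (hδ : 0 ≤ δ) (hε : 0 ≤ ε) (hs : 0 ≤ s) (hsb : s ≤ b) (hb : b ≤ 1) :
    IntervalIntegrable (fun t => (JNh δ ε u t)^2) volume s b := by
  rw [intervalIntegrable_iff_integrableOn_Ioc_of_le hsb]
  have hla : IntegrableOn (fun t => |Real.log t|) (Set.Ioc s b) :=
    ((intervalIntegrable_iff_integrableOn_Ioc_of_le hsb).1 (JNII_log hs hsb hb)).abs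
  have hl2 : IntegrableOn (fun t => (Real.log t)^2) (Set.Ioc s b) :=
    (intervalIntegrable_iff_integrableOn_Ioc_of_le hsb).1 (JNII_log2 hs hsb hb)
  have hg : IntegrableOn (fun t => (δ + ε*|Real.log u|)^2
      + 2*(δ + ε*|Real.log u|)*ε*|Real.log t| + ε^2*(Real.log t)^2) (Set.Ioc s b) :=
    ((integrableOn_const measure_Ioc_lt_top.ne).add
      (hla.const_mul _)).add (hl2.const_mul _)
  apply hg.mono' (((JNh_meas δ ε u).pow_const 2).aestronglyMeasurable)
  apply ae_of_all
  intro t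
  have h0 := JNh_nonneg (u := u) hδ hε t
  have h1 := JNh_le (δ := δ) (u := u) hε t
  rw [Real.norm_eq_abs, abs_of_nonneg (sq_nonneg _)]
  have h2 := abs_nonneg (Real.log t)
  have h3 := abs_nonneg (Real.log u)
  have h4 : |Real.log t|^2 = (Real.log t)^2 := sq_abs _
  nlinarith [sq_nonneg (JNh δ ε u t - (δ + ε*(|Real.log u| + |Real.log t|)))]

/-- region 1 : `s ≤ b ≤ u`, where `JNh = (δ + ε log u) - ε log t`. -/
lemma JNh_eq_r1 {δ ε u s b : ℝ} (hu : 0 < u) (hs : 0 ≤ s) (hbu : b ≤ u) {t : ℝ}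
    (ht : t ∈ Set.Ioc s b) : JNh δ ε u t = (δ + ε * Real.log u) - ε * Real.log t := by
  have ht0 : 0 < t := lt_of_le_of_lt hs ht.1
  have : Real.log t ≤ Real.log u := Real.log_le_log ht0 (ht.2.trans hbu)
  simp only [JNh, max_eq_right (sub_nonneg.2 this)]
  ring

/-- region 2 : `u ≤ s`, where `JNh = δ`. -/
lemma JNh_eq_r2 {δ ε u s b : ℝ} (hu : 0 < u) (hus : u ≤ s) {t : ℝ}
    (ht : t ∈ Set.Ioc s b) : JNh δ ε u t = δ := by
  have : Real.log u ≤ Real.log t := Real.log_le_log hu (hus.trans ht.1.le)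
  simp only [JNh, max_eq_left (sub_nonpos.2 this)]
  ring

lemma JNint_h_r1 {δ ε u s b : ℝ} (hu : 0 < u) (hs : 0 ≤ s) (hsb : s ≤ b) (hbu : b ≤ u) (hu1 : u ≤ 1) :
    ∫ t in s..b, JNh δ ε u t =
      (δ + ε * Real.log u) * (b - s) - ε * ((b * Real.log b - b) - (s * Real.log s - s)) := by
  have hb1 : b ≤ 1 := hbu.trans hu1
  rw [integral_of_le hsb,
    setIntegral_congr_fun measurableSet_Ioc (fun t ht => JNh_eq_r1 hu hs hbu ht),
    ← integral_of_le hsb]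
  rw [intervalIntegral.integral_sub intervalIntegrable_const
    ((JNII_log hs hsb hb1).const_mul ε), intervalIntegral.integral_const,
    intervalIntegral.integral_const_mul, JNint_log hs hsb hb1]
  simp [smul_eq_mul]; ring

lemma JNint_h2_r1 {δ ε u s b : ℝ} (hu : 0 < u) (hs : 0 ≤ s) (hsb : s ≤ b) (hbu : b ≤ u) (hu1 : u ≤ 1) :
    ∫ t in s..b, (JNh δ ε u t)^2 =
      (δ + ε * Real.log u)^2 * (b - s)
      - 2*(δ + ε * Real.log u)*ε * ((b * Real.log b - b) - (s * Real.log s - s))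
      + ε^2 * ((b * (Real.log b)^2 - 2*(b * Real.log b) + 2*b)
             - (s * (Real.log s)^2 - 2*(s * Real.log s) + 2*s)) := by
  have hb1 : b ≤ 1 := hbu.trans hu1
  have heq : ∀ t ∈ Set.Ioc s b, (JNh δ ε u t)^2 =
      (δ + ε * Real.log u)^2 - 2*(δ + ε * Real.log u)*ε * Real.log t + ε^2 * (Real.log t)^2 := by
    intro t ht
    rw [JNh_eq_r1 hu hs hbu ht]; ring
  rw [integral_of_le hsb, setIntegral_congr_fun measurableSet_Ioc heq, ← integral_of_le hsb]
  rw [intervalIntegral.integral_add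
      (intervalIntegrable_const.sub ((JNII_log hs hsb hb1).const_mul _))
      ((JNII_log2 hs hsb hb1).const_mul _),
    intervalIntegral.integral_sub intervalIntegrable_const ((JNII_log hs hsb hb1).const_mul _),
    intervalIntegral.integral_const, intervalIntegral.integral_const_mul,
    intervalIntegral.integral_const_mul, JNint_log hs hsb hb1, JNint_log2 hs hsb hb1]
  simp [smul_eq_mul]; ring

lemma JNint_h_r2 {δ ε u s b : ℝ} (hu : 0 < u) (hus : u ≤ s) (hsb : s ≤ b) :
    ∫ t in s..b, JNh δ ε u t = δ * (b - s) := by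
  rw [integral_of_le hsb,
    setIntegral_congr_fun measurableSet_Ioc (fun t ht => JNh_eq_r2 hu hus ht),
    ← integral_of_le hsb, intervalIntegral.integral_const]
  simp [smul_eq_mul]; ring

lemma JNint_h2_r2 {δ ε u s b : ℝ} (hu : 0 < u) (hus : u ≤ s) (hsb : s ≤ b) :
    ∫ t in s..b, (JNh δ ε u t)^2 = δ^2 * (b - s) := by
  have heq : ∀ t ∈ Set.Ioc s b, (JNh δ ε u t)^2 = δ^2 := by
    intro t ht; rw [JNh_eq_r2 hu hus ht]
  rw [integral_of_le hsb, setIntegral_congr_fun measurableSet_Ioc heq,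
    ← integral_of_le hsb, intervalIntegral.integral_const]
  simp [smul_eq_mul]; ring

/-- key inequality `s (log(u/s) + 2)^2 ≤ 4u` for `0 ≤ s ≤ u`. -/
lemma JNkey {s u : ℝ} (hu : 0 < u) (hs : 0 ≤ s) (hsu : s ≤ u) :
    s * ((Real.log u - Real.log s) + 2)^2 ≤ 4 * u := by
  rcases eq_or_lt_of_le hs with h | hs0
  · rw [← h]; simp; linarith
  · have hμ0 : 0 ≤ Real.log u - Real.log s := sub_nonneg.2 (Real.log_le_log hs0 hsu)
    have h1 : (Real.log u - Real.log s)/2 + 1 ≤ Real.exp ((Real.log u - Real.log s)/2) :=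
      Real.add_one_le_exp _
    have h2 : Real.exp ((Real.log u - Real.log s)/2) * Real.exp ((Real.log u - Real.log s)/2)
        = u / s := by
      rw [← Real.exp_add]
      have he : (Real.log u - Real.log s)/2 + (Real.log u - Real.log s)/2
          = Real.log u - Real.log s := by ring
      rw [he, Real.exp_sub, Real.exp_log hu, Real.exp_log hs0]
    have h3 : ((Real.log u - Real.log s)/2 + 1)^2 ≤ u / s := by nlinarith
    have h4 := mul_le_mul_of_nonneg_left h3 hs0.le
    rw [mul_div_cancel₀ _ hs0.ne'] at h4
    have h5 : s * ((Real.log u - Real.log s) + 2)^2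
        = 4 * (s * ((Real.log u - Real.log s)/2 + 1)^2) := by ring
    linarith

lemma JNquad (δ ε L X W : ℝ) (h : W^2 - 4*X^2 ≤ 0) :
    L*(δ^2*L + 2*δ*ε*X + ε^2*W) - (δ*L + ε*X)^2 ≤ ε^2*L^2 := by
  have h1 : 0 ≤ ε^2*((2*L-W)^2) := mul_nonneg (sq_nonneg ε) (sq_nonneg _)
  have h2 : 0 ≤ ε^2*(4*X^2 - W^2) := mul_nonneg (sq_nonneg ε) (by linarith)
  have h3 : ε^2*L^2 - (L*(δ^2*L + 2*δ*ε*X + ε^2*W) - (δ*L + ε*X)^2)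
      = (ε^2*((2*L-W)^2) + ε^2*(4*X^2 - W^2))/4 := by ring
  linarith

/-- Main variance bound for `JNh` on any subinterval of `[0,1]`. -/
lemma JNQA {δ ε u s b : ℝ} (hδ : 0 ≤ δ) (hε : 0 ≤ ε) (hu : 0 < u) (hu1 : u ≤ 1)
    (hs : 0 ≤ s) (hsb : s ≤ b) (hb : b ≤ 1) :
    (b - s) * (∫ t in s..b, (JNh δ ε u t)^2) - (∫ t in s..b, JNh δ ε u t)^2
      ≤ ε^2 * (b - s)^2 := by
  rcases le_or_gt b u with hbu | hub
  · -- pure log region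
    rw [JNint_h_r1 hu hs hsb hbu hu1, JNint_h2_r1 hu hs hsb hbu hu1]
    have hb0 : 0 ≤ b := hs.trans hsb
    have key : (b - s) * ((δ + ε * Real.log u)^2 * (b - s)
      - 2*(δ + ε * Real.log u)*ε * ((b * Real.log b - b) - (s * Real.log s - s))
      + ε^2 * ((b * (Real.log b)^2 - 2*(b * Real.log b) + 2*b)
             - (s * (Real.log s)^2 - 2*(s * Real.log s) + 2*s)))
      - ((δ + ε * Real.log u) * (b - s) - ε * ((b * Real.log b - b) - (s * Real.log s - s)))^2
      = ε^2 * ((b - s)^2 - s * b * (Real.log b - Real.log s)^2) := by ring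
    rw [key]
    nlinarith [mul_nonneg (mul_nonneg hs hb0) (sq_nonneg (Real.log b - Real.log s)), sq_nonneg ε]
  · rcases le_or_gt u s with hus | hsu
    · -- constant region
      rw [JNint_h_r2 hu hus hsb, JNint_h2_r2 hu hus hsb]
      nlinarith [sq_nonneg (ε * (b - s)), sq_nonneg (δ * (b - s))]
    · -- mixed region: split at u
      have hIa := intervalIntegral.integral_add_adjacent_intervals
        (JNII_h hδ hε hs hsu.le hu1 (u := u)) (JNII_h hδ hε (hs.trans hsu.le) hub.le hb (u := u))
      have hIb := intervalIntegral.integral_add_adjacent_intervals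
        (JNII_h2 hδ hε hs hsu.le hu1 (u := u)) (JNII_h2 hδ hε (hs.trans hsu.le) hub.le hb (u := u))
      rw [← hIa, ← hIb, JNint_h_r1 hu hs hsu.le le_rfl hu1, JNint_h2_r1 hu hs hsu.le le_rfl hu1,
        JNint_h_r2 hu le_rfl hub.le, JNint_h2_r2 hu le_rfl hub.le]
      have e1 : (δ + ε * Real.log u) * (u - s)
          - ε * ((u * Real.log u - u) - (s * Real.log s - s)) + δ * (b - u)
          = δ*(b-s) + ε*(u - s*((Real.log u - Real.log s)+1)) := by ring
      have e2 : (δ + ε * Real.log u)^2 * (u - s)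
          - 2*(δ + ε * Real.log u)*ε * ((u * Real.log u - u) - (s * Real.log s - s))
          + ε^2 * ((u * (Real.log u)^2 - 2*(u * Real.log u) + 2*u)
                 - (s * (Real.log s)^2 - 2*(s * Real.log s) + 2*s))
          + δ^2 * (b - u)
          = δ^2*(b-s) + 2*δ*ε*(u - s*((Real.log u - Real.log s)+1))
            + ε^2*(2*u - s*((Real.log u - Real.log s)^2+2*(Real.log u - Real.log s)+2)) := by ring
      rw [e1, e2]
      have key := JNkey hu hs hsu.le
      have hid : (2*u - s*((Real.log u - Real.log s)^2+2*(Real.log u - Real.log s)+2))^2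
          - 4*(u - s*((Real.log u - Real.log s)+1))^2
          = -(s*(Real.log u - Real.log s)^2*(4*u - s*((Real.log u - Real.log s)+2)^2)) := by ring
      apply JNquad
      have hnn : 0 ≤ s*(Real.log u - Real.log s)^2*(4*u - s*((Real.log u - Real.log s)+2)^2) :=
        mul_nonneg (mul_nonneg hs (sq_nonneg _)) (by linarith)
      linarith

/-- crossing bound: `∫_x^{1/2} h² ≤ ε² (1/2 - x)`. -/
lemma JNHB {δ ε u x : ℝ} (hδ : 0 ≤ δ) (hε : 0 ≤ ε) (hδε : δ ≤ ε) (hu : 0 < u) (hu2 : u ≤ 1/2)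
    (hId : δ^2 + 4*ε*δ*u + 4*ε^2*u = ε^2)
    (hx : 0 ≤ x) (hx2 : x ≤ 1/2) :
    ∫ t in x..(1/2:ℝ), (JNh δ ε u t)^2 ≤ ε^2 * (1/2 - x) := by
  rcases le_or_gt u x with hux | hxu
  · rw [JNint_h2_r2 hu hux hx2]
    have : δ^2 ≤ ε^2 := by nlinarith
    apply mul_le_mul_of_nonneg_right this (by linarith)
  · have hsplit := intervalIntegral.integral_add_adjacent_intervals
      (JNII_h2 hδ hε hx hxu.le (by linarith) (u := u)) (JNII_h2 hδ hε (by linarith) hu2 (by norm_num) (u := u))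
    rw [← hsplit, JNint_h2_r1 hu hx hxu.le le_rfl (by linarith), JNint_h2_r2 hu le_rfl hu2]
    have e2 : (δ + ε * Real.log u)^2 * (u - x)
        - 2*(δ + ε * Real.log u)*ε * ((u * Real.log u - u) - (x * Real.log x - x))
        + ε^2 * ((u * (Real.log u)^2 - 2*(u * Real.log u) + 2*u)
               - (x * (Real.log x)^2 - 2*(x * Real.log x) + 2*x))
        + δ^2 * (1/2 - u)
        = δ^2 * (1/2 - x) + 2*δ*ε*(u - x*((Real.log u - Real.log x)+1))
          + ε^2*(2*u - x*((Real.log u - Real.log x)^2+2*(Real.log u - Real.log x)+2)) := by ring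
    rw [e2]
    rcases eq_or_lt_of_le hx with h0 | hx0
    · rw [← h0]
      have hgoal : δ^2 * (1/2 - 0) + 2*δ*ε*(u - 0*((Real.log u - Real.log 0)+1))
          + ε^2*(2*u - 0*((Real.log u - Real.log 0)^2+2*(Real.log u - Real.log 0)+2))
          = ε^2 * (1/2 - 0) := by linear_combination (1/2) * hId
      linarith [le_of_eq hgoal]
    · have hμ0 : 0 ≤ Real.log u - Real.log x := sub_nonneg.2 (Real.log_le_log hx0 hxu.le)
      have hfac : 4*u*(δ+ε) ≤ 2*δ*((Real.log u - Real.log x)+1)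
          + ε*((Real.log u - Real.log x)^2+2*(Real.log u - Real.log x)+2) := by
        nlinarith [mul_nonneg hδ hμ0, mul_nonneg hε (sq_nonneg (Real.log u - Real.log x)),
          mul_nonneg hε hμ0, mul_nonneg (add_nonneg hδ hε) (by linarith : (0:ℝ) ≤ 2 - 4*u)]
      have hεx : 0 ≤ ε * x := mul_nonneg hε hx0.le
      have hdiff : ε^2 * (1/2 - x) - (δ^2 * (1/2 - x) + 2*δ*ε*(u - x*((Real.log u - Real.log x)+1))
          + ε^2*(2*u - x*((Real.log u - Real.log x)^2+2*(Real.log u - Real.log x)+2)))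
          = (ε*x) * (2*δ*((Real.log u - Real.log x)+1)
            + ε*((Real.log u - Real.log x)^2+2*(Real.log u - Real.log x)+2) - 4*u*(δ+ε))
            := by linear_combination (x - 1/2) * hId
      nlinarith [mul_le_mul_of_nonneg_left (by linarith [hfac] : (0:ℝ) ≤ 2*δ*((Real.log u - Real.log x)+1)
          + ε*((Real.log u - Real.log x)^2+2*(Real.log u - Real.log x)+2) - 4*u*(δ+ε)) hεx]

lemma JNvar (f : ℝ → ℝ) (ε c d : ℝ) (hcd : c < d)
    (h1 : IntervalIntegrable f volume c d)
    (h2 : IntervalIntegrable (fun t => (f t)^2) volume c d)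
    (hQ : (d - c) * (∫ t in c..d, (f t)^2) - (∫ t in c..d, f t)^2 ≤ ε^2 * (d - c)^2) :
    intervalAvg c d (fun t => (f t - intervalAvg c d f)^2) ≤ ε^2 := by
  have hd : (0:ℝ) < d - c := by linarith
  set I1 := ∫ t in c..d, f t with hI1
  set I2 := ∫ t in c..d, (f t)^2 with hI2
  set v := (d - c)⁻¹ with hv
  have hrel : v * (d - c) = 1 := inv_mul_cancel₀ hd.ne'
  have hm : intervalAvg c d f = v * I1 := rfl
  have hint : ∫ t in c..d, (f t - intervalAvg c d f)^2
      = I2 - (2*(v*I1))*I1 + (d - c)*(v*I1)^2 := by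
    have e : (fun t => (f t - intervalAvg c d f)^2)
        = fun t => ((f t)^2 - (2*(v*I1))*(f t) + (v*I1)^2) := by
      funext t; rw [hm]; ring
    rw [e, intervalIntegral.integral_add (h2.sub (h1.const_mul _)) intervalIntegrable_const,
      intervalIntegral.integral_sub h2 (h1.const_mul _), intervalIntegral.integral_const_mul,
      intervalIntegral.integral_const]
    all_goals simp only [smul_eq_mul, ← hI1, ← hI2]
    all_goals ring
  show v * (∫ t in c..d, (f t - intervalAvg c d f)^2) ≤ ε^2
  rw [hint]
  have e2 : v*(I2 - (2*(v*I1))*I1 + (d - c)*(v*I1)^2) = v^2*((d - c)*I2 - I1^2) := by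
    linear_combination (v^2*I1^2 - v*I2) * hrel
  rw [e2]
  calc v^2*((d - c)*I2 - I1^2) ≤ v^2*(ε^2 * (d - c)^2) :=
        mul_le_mul_of_nonneg_left hQ (sq_nonneg v)
    _ = ε^2 * (v*(d-c))^2 := by ring
    _ = ε^2 := by rw [hrel]; ring

section easycase
variable {ε : ℝ}

lemma JNeasy (h0 : 0 ≤ ε) :
    ∃ φ : ℝ → ℝ,
      (MeasureTheory.IntegrableOn φ (Set.Icc 0 1) ∧
       MeasureTheory.IntegrableOn (fun t => (φ t) ^ 2) (Set.Icc 0 1) ∧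
       ∀ c d : ℝ, (0:ℝ) ≤ c → c < d → d ≤ 1 →
         intervalAvg c d (fun t => (φ t - intervalAvg c d φ) ^ 2) ≤ ε ^ 2) ∧
      intervalAvg 0 1 φ = 0 ∧
      intervalAvg 0 1 (fun t => Real.exp |φ t|) = Real.exp ε := by
  classical
  set φ : ℝ → ℝ := fun t => if t ≤ 1/2 then ε else -ε with hφ
  have hmeas : Measurable φ := Measurable.ite measurableSet_Iic measurable_const measurable_const
  have hsq : (fun t => (φ t)^2) = fun _ => ε^2 := by
    funext t
    show (if t ≤ 1/2 then ε else -ε)^2 = ε^2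
    by_cases h : t ≤ 1/2
    · rw [if_pos h]
    · rw [if_neg h]; ring
  have habs : (fun t => Real.exp |φ t|) = fun _ => Real.exp ε := by
    funext t
    show Real.exp |if t ≤ 1/2 then ε else -ε| = Real.exp ε
    by_cases h : t ≤ 1/2
    · rw [if_pos h, abs_of_nonneg h0]
    · rw [if_neg h, abs_neg, abs_of_nonneg h0]
  have hII : ∀ c d : ℝ, IntervalIntegrable φ volume c d := by
    intro c d
    apply IntervalIntegrable.mono_fun (_root_.intervalIntegrable_const (c := ε))
      hmeas.aestronglyMeasurable
    apply ae_of_all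
    intro t
    show ‖if t ≤ 1/2 then ε else -ε‖ ≤ ‖ε‖
    by_cases h : t ≤ 1/2
    · rw [if_pos h]
    · rw [if_neg h, norm_neg]
  have hII2 : ∀ c d : ℝ, IntervalIntegrable (fun t => (φ t)^2) volume c d := by
    intro c d; rw [hsq]; exact intervalIntegrable_const
  refine ⟨φ, ⟨?_, ?_, ?_⟩, ?_, ?_⟩
  · exact (intervalIntegrable_iff_integrableOn_Icc_of_le (by norm_num)).1 (hII 0 1)
  · exact (intervalIntegrable_iff_integrableOn_Icc_of_le (by norm_num)).1 (hII2 0 1)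
  · intro c d hc hcd hd
    apply JNvar φ ε c d hcd (hII c d) (hII2 c d)
    have : ∫ t in c..d, (φ t)^2 = ε^2 * (d - c) := by
      rw [hsq, intervalIntegral.integral_const]; simp [smul_eq_mul]; ring
    rw [this]
    nlinarith [sq_nonneg (∫ t in c..d, φ t)]
  · have h1 : ∫ t in (0:ℝ)..(1/2:ℝ), φ t = ε * (1/2) := by
      rw [intervalIntegral.integral_of_le (by norm_num : (0:ℝ) ≤ 1/2),
        MeasureTheory.setIntegral_congr_fun measurableSet_Ioc
          (fun t (ht : t ∈ Set.Ioc (0:ℝ) (1/2:ℝ)) => by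
            simp only [hφ]; rw [if_pos ht.2]),
        ← intervalIntegral.integral_of_le (by norm_num : (0:ℝ) ≤ 1/2),
        intervalIntegral.integral_const]
      simp [smul_eq_mul]; ring
    have h2 : ∫ t in (1/2:ℝ)..(1:ℝ), φ t = -ε * (1/2) := by
      rw [intervalIntegral.integral_of_le (by norm_num : (1/2:ℝ) ≤ 1),
        MeasureTheory.setIntegral_congr_fun measurableSet_Ioc
          (fun t (ht : t ∈ Set.Ioc (1/2:ℝ) (1:ℝ)) => by
            simp only [hφ]; rw [if_neg (not_le.2 ht.1)]),
        ← intervalIntegral.integral_of_le (by norm_num : (1/2:ℝ) ≤ 1),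
        intervalIntegral.integral_const]
      simp [smul_eq_mul]; ring
    have := intervalIntegral.integral_add_adjacent_intervals (hII 0 (1/2)) (hII (1/2) 1)
    rw [intervalAvg, ← this, h1, h2]
    ring
  · rw [intervalAvg, habs, intervalIntegral.integral_const]
    simp

end easycase

set_option maxHeartbeats 2000000 in
lemma JNhard {ε : ℝ} (hε2 : 1/2 < ε) (h1 : ε < 1) :
    ∃ φ : ℝ → ℝ,
      (MeasureTheory.IntegrableOn φ (Set.Icc 0 1) ∧
       MeasureTheory.IntegrableOn (fun t => (φ t) ^ 2) (Set.Icc 0 1) ∧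
       ∀ c d : ℝ, (0:ℝ) ≤ c → c < d → d ≤ 1 →
         intervalAvg c d (fun t => (φ t - intervalAvg c d φ) ^ 2) ≤ ε ^ 2) ∧
      intervalAvg 0 1 φ = 0 ∧
      intervalAvg 0 1 (fun t => Real.exp |φ t|) = Real.exp (1 - ε) / (2 - 2 * ε) := by
  classical
  have hε0 : (0:ℝ) < ε := by linarith
  obtain ⟨δ, hδdef⟩ : ∃ x : ℝ, x = 1 - ε := ⟨_, rfl⟩
  obtain ⟨u, hudef⟩ : ∃ x : ℝ, x = (2*ε - 1)/(4*ε) := ⟨_, rfl⟩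
  have hδ0 : 0 < δ := by rw [hδdef]; linarith
  have hδε : δ ≤ ε := by rw [hδdef]; linarith
  have hu0 : 0 < u := by rw [hudef]; apply div_pos <;> linarith
  have hu4 : u ≤ 1/4 := by
    rw [hudef, div_le_iff₀ (by positivity)]; linarith
  have hu2 : u ≤ 1/2 := by linarith
  have hu1 : u ≤ 1 := by linarith
  have hId : δ^2 + 4*ε*δ*u + 4*ε^2*u = ε^2 := by
    rw [hδdef, hudef]; field_simp; ring
  obtain ⟨φ, hφdef⟩ : ∃ f : ℝ → ℝ,
      f = fun t => if t ≤ 1/2 then JNh δ ε u t else -(JNh δ ε u (1 - t)) := ⟨_, rfl⟩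
  -- pointwise identification on Ioc pieces
  have eqA : ∀ {c d : ℝ}, d ≤ 1/2 → Set.EqOn φ (JNh δ ε u) (Set.Ioc c d) := by
    intro c d hd t ht
    rw [hφdef]
    exact if_pos (ht.2.trans hd)
  have eqB : ∀ {c d : ℝ}, 1/2 ≤ c → Set.EqOn φ (fun t => -(JNh δ ε u (1 - t))) (Set.Ioc c d) := by
    intro c d hc t ht
    rw [hφdef]
    exact if_neg (not_le.2 (lt_of_le_of_lt hc ht.1))
  -- integrability of φ on subintervals of [0,1]
  have IIφ : ∀ c d : ℝ, 0 ≤ c → c ≤ d → d ≤ 1 → IntervalIntegrable φ volume c d := by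
    intro c d hc hcd hd
    have piece : ∀ a b : ℝ, 0 ≤ a → a ≤ b → b ≤ 1 → (b ≤ 1/2 ∨ 1/2 ≤ a) →
        IntervalIntegrable φ volume a b := by
      intro a b ha hab hb hcase
      rw [intervalIntegrable_iff_integrableOn_Ioc_of_le hab]
      rcases hcase with hb2 | ha2
      · exact (((intervalIntegrable_iff_integrableOn_Ioc_of_le hab).1
          (JNII_h hδ0.le hε0.le ha hab hb)).congr_fun (eqA hb2).symm measurableSet_Ioc)
      · have hcomp := (JNII_h (δ := δ) (ε := ε) (u := u) hδ0.le hε0.le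
          (by linarith : (0:ℝ) ≤ 1 - b) (by linarith : 1 - b ≤ 1 - a)
          (by linarith : 1 - a ≤ 1)).comp_sub_left 1
        simp only [show (1:ℝ) - (1 - b) = b by ring, show (1:ℝ) - (1 - a) = a by ring] at hcomp
        have := ((intervalIntegrable_iff_integrableOn_Ioc_of_le hab).1 hcomp.symm.neg)
        exact this.congr_fun (eqB ha2).symm measurableSet_Ioc
    rcases le_or_gt d (1/2) with hd2 | hd2
    · exact piece c d hc hcd hd (Or.inl hd2)
    rcases le_or_gt (1/2) c with hc2 | hc2
    · exact piece c d hc hcd hd (Or.inr hc2)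
    · exact (piece c (1/2) hc hc2.le (by norm_num) (Or.inl le_rfl)).trans
        (piece (1/2) d (by norm_num) hd2.le hd (Or.inr le_rfl))
  have IIφ2 : ∀ c d : ℝ, 0 ≤ c → c ≤ d → d ≤ 1 →
      IntervalIntegrable (fun t => (φ t)^2) volume c d := by
    intro c d hc hcd hd
    have piece : ∀ a b : ℝ, 0 ≤ a → a ≤ b → b ≤ 1 → (b ≤ 1/2 ∨ 1/2 ≤ a) →
        IntervalIntegrable (fun t => (φ t)^2) volume a b := by
      intro a b ha hab hb hcase
      rw [intervalIntegrable_iff_integrableOn_Ioc_of_le hab]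
      rcases hcase with hb2 | ha2
      · refine (((intervalIntegrable_iff_integrableOn_Ioc_of_le hab).1
          (JNII_h2 (δ := δ) (ε := ε) (u := u) hδ0.le hε0.le ha hab hb)).congr_fun
          ?_ measurableSet_Ioc)
        intro t ht
        show (JNh δ ε u t)^2 = (φ t)^2
        rw [eqA hb2 ht]
      · have hcomp := (JNII_h2 (δ := δ) (ε := ε) (u := u) hδ0.le hε0.le
          (by linarith : (0:ℝ) ≤ 1 - b) (by linarith : 1 - b ≤ 1 - a)
          (by linarith : 1 - a ≤ 1)).comp_sub_left 1
        simp only [show (1:ℝ) - (1 - b) = b by ring, show (1:ℝ) - (1 - a) = a by ring] at hcomp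
        refine ((intervalIntegrable_iff_integrableOn_Ioc_of_le hab).1 hcomp.symm).congr_fun
          ?_ measurableSet_Ioc
        intro t ht
        show (JNh δ ε u (1 - t))^2 = (φ t)^2
        rw [eqB ha2 ht]
        ring
    rcases le_or_gt d (1/2) with hd2 | hd2
    · exact piece c d hc hcd hd (Or.inl hd2)
    rcases le_or_gt (1/2) c with hc2 | hc2
    · exact piece c d hc hcd hd (Or.inr hc2)
    · exact (piece c (1/2) hc hc2.le (by norm_num) (Or.inl le_rfl)).trans
        (piece (1/2) d (by norm_num) hd2.le hd (Or.inr le_rfl))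
  -- integral transfers
  have intA : ∀ c d : ℝ, c ≤ d → d ≤ 1/2 →
      ∫ t in c..d, φ t = ∫ t in c..d, JNh δ ε u t := by
    intro c d hcd hd2
    rw [intervalIntegral.integral_of_le hcd, intervalIntegral.integral_of_le hcd]
    exact setIntegral_congr_fun measurableSet_Ioc (eqA hd2)
  have intA2 : ∀ c d : ℝ, c ≤ d → d ≤ 1/2 →
      ∫ t in c..d, (φ t)^2 = ∫ t in c..d, (JNh δ ε u t)^2 := by
    intro c d hcd hd2
    rw [intervalIntegral.integral_of_le hcd, intervalIntegral.integral_of_le hcd]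
    exact setIntegral_congr_fun measurableSet_Ioc (fun t ht => by rw [eqA hd2 ht])
  have intB : ∀ c d : ℝ, 1/2 ≤ c → c ≤ d →
      ∫ t in c..d, φ t = -(∫ t in (1-d)..(1-c), JNh δ ε u t) := by
    intro c d hc2 hcd
    have e1 : ∫ t in c..d, φ t = ∫ t in c..d, -(JNh δ ε u (1 - t)) := by
      rw [intervalIntegral.integral_of_le hcd, intervalIntegral.integral_of_le hcd]
      exact setIntegral_congr_fun measurableSet_Ioc (eqB hc2)
    rw [e1, intervalIntegral.integral_neg, intervalIntegral.integral_comp_sub_left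
      (JNh δ ε u) 1]
  have intB2 : ∀ c d : ℝ, 1/2 ≤ c → c ≤ d →
      ∫ t in c..d, (φ t)^2 = ∫ t in (1-d)..(1-c), (JNh δ ε u t)^2 := by
    intro c d hc2 hcd
    have e1 : ∫ t in c..d, (φ t)^2 = ∫ t in c..d, (JNh δ ε u (1 - t))^2 := by
      rw [intervalIntegral.integral_of_le hcd, intervalIntegral.integral_of_le hcd]
      exact setIntegral_congr_fun measurableSet_Ioc (fun t ht => by rw [eqB hc2 ht]; ring)
    rw [e1, intervalIntegral.integral_comp_sub_left (fun t => (JNh δ ε u t)^2) 1]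
  refine ⟨φ, ⟨?_, ?_, ?_⟩, ?_, ?_⟩
  · exact (intervalIntegrable_iff_integrableOn_Icc_of_le (by norm_num)).1
      (IIφ 0 1 le_rfl (by norm_num) le_rfl)
  · exact (intervalIntegrable_iff_integrableOn_Icc_of_le (by norm_num)).1
      (IIφ2 0 1 le_rfl (by norm_num) le_rfl)
  · -- BMO condition
    intro c d hc hcd hd
    apply JNvar φ ε c d hcd (IIφ c d hc hcd.le hd) (IIφ2 c d hc hcd.le hd)
    rcases le_or_gt d (1/2) with hd2 | hd2
    · rw [intA c d hcd.le hd2, intA2 c d hcd.le hd2]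
      exact JNQA hδ0.le hε0.le hu0 hu1 hc hcd.le hd
    rcases le_or_gt (1/2) c with hc2 | hc2
    · rw [intB c d hc2 hcd.le, intB2 c d hc2 hcd.le]
      have key := JNQA (δ := δ) (ε := ε) (u := u) hδ0.le hε0.le hu0 hu1
        (by linarith : (0:ℝ) ≤ 1 - d) (by linarith : 1 - d ≤ 1 - c) (by linarith : 1 - c ≤ 1)
      have e2 : (1 - c) - (1 - d) = d - c := by ring
      rw [e2] at key
      have e3 : (-(∫ t in (1-d)..(1-c), JNh δ ε u t))^2
          = (∫ t in (1-d)..(1-c), JNh δ ε u t)^2 := by ring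
      rw [e3]
      exact key
    · -- crossing case
      have hsp := intervalIntegral.integral_add_adjacent_intervals
        (IIφ2 c (1/2) hc hc2.le (by norm_num)) (IIφ2 (1/2) d (by norm_num) hd2.le hd)
      have b1 : ∫ t in c..(1/2:ℝ), (φ t)^2 ≤ ε^2 * (1/2 - c) := by
        rw [intA2 c (1/2) hc2.le le_rfl]
        exact JNHB hδ0.le hε0.le hδε hu0 hu2 hId hc hc2.le
      have b2 : ∫ t in (1/2:ℝ)..d, (φ t)^2 ≤ ε^2 * (d - 1/2) := by
        rw [intB2 (1/2) d le_rfl hd2.le, show (1:ℝ) - 1/2 = 1/2 from by norm_num]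
        have hB := JNHB (δ := δ) (ε := ε) (u := u) hδ0.le hε0.le hδε hu0 hu2 hId
          (by linarith : (0:ℝ) ≤ 1 - d) (by linarith : 1 - d ≤ 1/2)
        calc ∫ t in (1-d)..(1/2:ℝ), (JNh δ ε u t)^2 ≤ ε^2*(1/2 - (1-d)) := hB
          _ = ε^2 * (d - 1/2) := by ring
      have hb : ∫ t in c..d, (φ t)^2 ≤ ε^2 * (d - c) := by
        rw [← hsp]; linarith
      nlinarith [mul_le_mul_of_nonneg_left hb (by linarith : (0:ℝ) ≤ d - c),
        sq_nonneg (∫ t in c..d, φ t)]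
  · -- mean zero
    have hsp := intervalIntegral.integral_add_adjacent_intervals
      (IIφ 0 (1/2) le_rfl (by norm_num) (by norm_num)) (IIφ (1/2) 1 (by norm_num) (by norm_num) le_rfl)
    have e1 := intA 0 (1/2) (by norm_num) le_rfl
    have e2 := intB (1/2) 1 le_rfl (by norm_num)
    have e3 : (1:ℝ) - 1 = 0 := by norm_num
    have e4 : (1:ℝ) - 1/2 = 1/2 := by norm_num
    rw [e3, e4] at e2
    rw [intervalAvg, ← hsp, e1, e2]
    ring
  · -- value
    have hexp1 : Set.EqOn (fun t => Real.exp (JNh δ ε u t))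
        (fun t => Real.exp δ * u^ε * t^(-ε)) (Set.Ioc 0 u) := by
      intro t ht
      have ht0 : (0:ℝ) < t := ht.1
      simp only
      rw [JNh_eq_r1 hu0 le_rfl le_rfl ht,
        Real.rpow_def_of_pos hu0, Real.rpow_def_of_pos ht0, ← Real.exp_add, ← Real.exp_add]
      congr 1
      ring
    have hIe1 : IntervalIntegrable (fun t => Real.exp (JNh δ ε u t)) volume 0 u := by
      rw [intervalIntegrable_iff_integrableOn_Ioc_of_le hu0.le]
      have base : IntegrableOn (fun t => Real.exp δ * u^ε * t^(-ε)) (Set.Ioc 0 u) :=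
        (JNint_rpow (-ε) (by linarith) 0 u hu0.le).const_mul (Real.exp δ * u^ε)
      exact base.congr_fun (fun t ht => (hexp1 ht).symm) measurableSet_Ioc
    have hIe2 : IntervalIntegrable (fun t => Real.exp (JNh δ ε u t)) volume u (1/2) := by
      rw [intervalIntegrable_iff_integrableOn_Ioc_of_le hu2]
      have hcbase : IntegrableOn (fun _ : ℝ => Real.exp δ) (Set.Ioc u (1/2:ℝ)) :=
        integrableOn_const measure_Ioc_lt_top.ne
      refine hcbase.congr_fun (fun t (ht : t ∈ Set.Ioc u (1/2:ℝ)) => ?_) measurableSet_Ioc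
      show Real.exp δ = Real.exp (JNh δ ε u t)
      rw [JNh_eq_r2 hu0 le_rfl ht]
    have hv1 : ∫ t in (0:ℝ)..u, Real.exp (JNh δ ε u t) = Real.exp δ * u / (1 - ε) := by
      rw [intervalIntegral.integral_of_le hu0.le,
        setIntegral_congr_fun measurableSet_Ioc hexp1,
        ← intervalIntegral.integral_of_le hu0.le,
        intervalIntegral.integral_const_mul,
        integral_rpow (Or.inl (by linarith : (-1:ℝ) < -ε)),
        Real.zero_rpow (by linarith : -ε + 1 ≠ 0)]
      have e5 : Real.exp δ * u ^ ε * ((u ^ (-ε + 1) - 0) / (-ε + 1))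
          = Real.exp δ * (u ^ ε * u ^ (-ε + 1)) / (-ε + 1) := by ring
      rw [e5, ← Real.rpow_add hu0, show ε + (-ε + 1) = 1 by ring, Real.rpow_one]
      have e6 : -ε + 1 = 1 - ε := by ring
      rw [e6]
    have hv2 : ∫ t in u..(1/2:ℝ), Real.exp (JNh δ ε u t) = Real.exp δ * (1/2 - u) := by
      rw [intervalIntegral.integral_of_le hu2,
        setIntegral_congr_fun measurableSet_Ioc
          (fun t (ht : t ∈ Set.Ioc u (1/2:ℝ)) => by
            show Real.exp (JNh δ ε u t) = Real.exp δ
            rw [JNh_eq_r2 hu0 le_rfl ht]),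
        ← intervalIntegral.integral_of_le hu2, intervalIntegral.integral_const]
      simp [smul_eq_mul]; ring
    have hvhalf := intervalIntegral.integral_add_adjacent_intervals hIe1 hIe2
    -- identify exp|φ| with exp∘JNh pieces
    have eqabs1 : Set.EqOn (fun t => Real.exp |φ t|) (fun t => Real.exp (JNh δ ε u t))
        (Set.Ioc 0 (1/2:ℝ)) := by
      intro t ht
      simp only
      rw [eqA le_rfl ht, abs_of_nonneg (JNh_nonneg hδ0.le hε0.le t)]
    have eqabs2 : Set.EqOn (fun t => Real.exp |φ t|) (fun t => Real.exp (JNh δ ε u (1 - t)))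
        (Set.Ioc (1/2:ℝ) 1) := by
      intro t ht
      simp only
      rw [eqB le_rfl ht, abs_neg, abs_of_nonneg (JNh_nonneg hδ0.le hε0.le (1 - t))]
    have hIa1 : IntervalIntegrable (fun t => Real.exp |φ t|) volume 0 (1/2) := by
      rw [intervalIntegrable_iff_integrableOn_Ioc_of_le (by norm_num : (0:ℝ) ≤ 1/2)]
      exact ((intervalIntegrable_iff_integrableOn_Ioc_of_le (by norm_num : (0:ℝ) ≤ 1/2)).1
        (hIe1.trans hIe2)).congr_fun (fun t ht => (eqabs1 ht).symm) measurableSet_Ioc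
    have hIa2 : IntervalIntegrable (fun t => Real.exp |φ t|) volume (1/2) 1 := by
      rw [intervalIntegrable_iff_integrableOn_Ioc_of_le (by norm_num : (1/2:ℝ) ≤ 1)]
      have hcomp := (hIe1.trans hIe2).comp_sub_left 1
      have e7 : (1:ℝ) - (1/2:ℝ) = 1/2 := by norm_num
      have e8 : (1:ℝ) - (0:ℝ) = 1 := by norm_num
      rw [e7, e8] at hcomp
      exact ((intervalIntegrable_iff_integrableOn_Ioc_of_le (by norm_num : (1/2:ℝ) ≤ 1)).1
        hcomp.symm).congr_fun (fun t ht => (eqabs2 ht).symm) measurableSet_Ioc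
    have hsp := intervalIntegral.integral_add_adjacent_intervals hIa1 hIa2
    have hpc1 : ∫ t in (0:ℝ)..(1/2:ℝ), Real.exp |φ t|
        = ∫ t in (0:ℝ)..(1/2:ℝ), Real.exp (JNh δ ε u t) := by
      rw [intervalIntegral.integral_of_le (by norm_num : (0:ℝ) ≤ 1/2),
        intervalIntegral.integral_of_le (by norm_num : (0:ℝ) ≤ 1/2)]
      exact setIntegral_congr_fun measurableSet_Ioc eqabs1
    have hpc2 : ∫ t in (1/2:ℝ)..(1:ℝ), Real.exp |φ t|
        = ∫ t in (0:ℝ)..(1/2:ℝ), Real.exp (JNh δ ε u t) := by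
      rw [intervalIntegral.integral_of_le (by norm_num : (1/2:ℝ) ≤ 1),
        setIntegral_congr_fun measurableSet_Ioc eqabs2,
        ← intervalIntegral.integral_of_le (by norm_num : (1/2:ℝ) ≤ 1),
        intervalIntegral.integral_comp_sub_left (fun t => Real.exp (JNh δ ε u t)) 1]
      norm_num
    rw [intervalAvg, ← hsp, hpc1, hpc2, ← hvhalf, hv1, hv2, hδdef, hudef]
    have hne1 : (1:ℝ) - ε ≠ 0 := by intro h; linarith [h]
    have hne2 : ε ≠ 0 := hε0.ne'
    have hne3 : (2:ℝ) - ε * 2 ≠ 0 := by intro h; nlinarith [h]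
    have hne4 : (2:ℝ) - 2 * ε ≠ 0 := by intro h; nlinarith [h]
    field_simp [hne1, hne2, hne3, hne4]
    ring
  done

/-- For every `ε ∈ [0,1)` the sharp symmetric integral John–Nirenberg
inequality is attained: there is `φ ∈ BMO_ε([0,1])` with `⟨φ⟩ = 0` and
`⟨exp|φ|⟩ = e^ε` if `ε ≤ 1/2`, and `⟨exp|φ|⟩ = e^{1−ε}/(2−2ε)` if `ε ≥ 1/2`. -/
theorem symmetric_JN_attained (ε : ℝ) (h0 : 0 ≤ ε) (h1 : ε < 1) :
    ∃ φ : ℝ → ℝ, MemBMO ε 0 1 φ ∧ intervalAvg 0 1 φ = 0 ∧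
      (ε ≤ 1 / 2 → intervalAvg 0 1 (fun t => Real.exp |φ t|) = Real.exp ε) ∧
      (1 / 2 ≤ ε → intervalAvg 0 1 (fun t => Real.exp |φ t|) =
        Real.exp (1 - ε) / (2 - 2 * ε)) := by
  rcases le_or_gt ε (1/2) with hle | hgt
  · obtain ⟨φ, hmem, hmean, hval⟩ := JNeasy h0
    refine ⟨φ, hmem, hmean, fun _ => hval, fun hge => ?_⟩
    have hε2 : ε = 1/2 := le_antisymm hle hge
    rw [hval, hε2]
    rw [show (1:ℝ) - 1/2 = 1/2 from by norm_num, show (2:ℝ) - 2*(1/2) = 1 from by norm_num]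
    norm_num
  · obtain ⟨φ, hmem, hmean, hval⟩ := JNhard hgt h1
    exact ⟨φ, hmem, hmean, fun hle' => absurd hle' (not_le.2 hgt), fun _ => hval⟩
end

section
/- For every ε ≥ 1 and every M > 0 there exists a function φ ∈ BMO_ε([0,1]) such that ⟨exp|φ − ⟨φ⟩_{[0,1]}|⟩_{[0,1]} > M; that is, for ε ≥ 1 the supremum of ⟨exp|φ − ⟨φ⟩_I|⟩_I over φ ∈ BMO_ε(I) is +∞. -/
open MeasureTheory Real

section JNhelpers
open intervalIntegral


lemma intInt_log' {c d : ℝ} (hc : 0 ≤ c) (hcd : c ≤ d) (hd : d ≤ 1) :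
    IntervalIntegrable Real.log volume c d := by
  have h : IntegrableOn (fun t => -Real.log t) (Set.Ioc c d) volume := by
    apply integrableOn_deriv_of_nonneg (g := fun t => t - t * Real.log t)
    · exact (continuous_id.sub Real.continuous_mul_log).continuousOn
    · intro x hx
      have hx0 : x ≠ 0 := (lt_of_le_of_lt hc hx.1).ne'
      exact ((hasDerivAt_id x).sub (Real.hasDerivAt_mul_log hx0)).congr_deriv (by ring)
    · intro x hx
      have : Real.log x ≤ 0 := Real.log_nonpos (lt_of_le_of_lt hc hx.1).le (by linarith [hx.2])
      linarith
  rw [intervalIntegrable_iff, Set.uIoc_of_le hcd]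
  exact h.neg.congr (Filter.Eventually.of_forall fun x => by simp)

lemma integral_log'' {c d : ℝ} (hc : 0 ≤ c) (hcd : c ≤ d) (hd : d ≤ 1) :
    ∫ t in c..d, Real.log t = d * Real.log d - d - (c * Real.log c - c) := by
  rw [integral_eq_sub_of_hasDeriv_right_of_le hcd (f := fun t => t * Real.log t - t)
    ((Real.continuous_mul_log.sub continuous_id).continuousOn) ?_ (intInt_log' hc hcd hd)]
  intro x hx
  have hx0 : x ≠ 0 := (lt_of_le_of_lt hc hx.1).ne'
  have : HasDerivAt (fun t => t * Real.log t - t) (Real.log x) x := by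
    have := (Real.hasDerivAt_mul_log hx0).sub (hasDerivAt_id x)
    exact this.congr_deriv (by ring)
  exact this.hasDerivWithinAt

lemma contOn_F2 : ContinuousOn (fun t : ℝ => t * Real.log t ^ 2) (Set.Ici 0) := by
  have hG : Continuous fun t : ℝ => 4 * (Real.sqrt t * Real.log (Real.sqrt t)) ^ 2 :=
    continuous_const.mul ((Real.continuous_mul_log.comp Real.continuous_sqrt).pow 2)
  refine hG.continuousOn.congr ?_
  intro t ht
  simp only [Set.mem_Ici] at ht
  show t * Real.log t ^ 2 = 4 * (Real.sqrt t * Real.log (Real.sqrt t)) ^ 2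
  rw [Real.log_sqrt ht, mul_pow, Real.sq_sqrt ht]
  ring

lemma hderiv_F2 {x : ℝ} (hx0 : x ≠ 0) :
    HasDerivAt (fun t : ℝ => t * Real.log t ^ 2 - 2 * (t * Real.log t) + 2 * t)
      (Real.log x ^ 2) x := by
  have h1 : HasDerivAt (fun t : ℝ => t * Real.log t ^ 2)
      (Real.log x ^ 2 + 2 * Real.log x) x := by
    have := (hasDerivAt_id x).mul ((Real.hasDerivAt_log hx0).pow 2)
    exact this.congr_deriv (by simp; field_simp)
  have h2 : HasDerivAt (fun t : ℝ => 2 * (t * Real.log t)) (2 * (Real.log x + 1)) x :=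
    (Real.hasDerivAt_mul_log hx0).const_mul 2
  have h3 : HasDerivAt (fun t : ℝ => 2 * t) 2 x := by
    simpa using (hasDerivAt_id x).const_mul 2
  exact ((h1.sub h2).add h3).congr_deriv (by ring)

lemma intInt_sqlog {c d : ℝ} (hc : 0 ≤ c) (hcd : c ≤ d) :
    IntervalIntegrable (fun t => Real.log t ^ 2) volume c d := by
  have h : IntegrableOn (fun t => Real.log t ^ 2) (Set.Ioc c d) volume := by
    apply integrableOn_deriv_of_nonneg
      (g := fun t => t * Real.log t ^ 2 - 2 * (t * Real.log t) + 2 * t)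
    · exact ((contOn_F2.sub (continuous_const.mul Real.continuous_mul_log).continuousOn).add
        (continuous_const.mul continuous_id).continuousOn).mono
        (Set.Icc_subset_Ici_self.trans (by rw [Set.Ici_subset_Ici]; exact hc) )
    · exact fun x hx => hderiv_F2 (lt_of_le_of_lt hc hx.1).ne'
    · exact fun x hx => sq_nonneg _
  rw [intervalIntegrable_iff, Set.uIoc_of_le hcd]
  exact h

lemma integral_sqlog {c d : ℝ} (hc : 0 ≤ c) (hcd : c ≤ d) :
    ∫ t in c..d, Real.log t ^ 2 =
      (d * Real.log d ^ 2 - 2 * (d * Real.log d) + 2 * d)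
        - (c * Real.log c ^ 2 - 2 * (c * Real.log c) + 2 * c) := by
  rw [integral_eq_sub_of_hasDeriv_right_of_le hcd
    (f := fun t => t * Real.log t ^ 2 - 2 * (t * Real.log t) + 2 * t)
    (((contOn_F2.sub (continuous_const.mul Real.continuous_mul_log).continuousOn).add
        (continuous_const.mul continuous_id).continuousOn).mono
        (Set.Icc_subset_Ici_self.trans (by rw [Set.Ici_subset_Ici]; exact hc)))
    (fun x hx => (hderiv_F2 (lt_of_le_of_lt hc hx.1).ne').hasDerivWithinAt)
    (intInt_sqlog hc hcd)]

lemma intInt_of_bdd {f : ℝ → ℝ} (hm : Measurable f) {c d C : ℝ}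
    (hC : ∀ t ∈ Set.uIoc c d, |f t| ≤ C) : IntervalIntegrable f volume c d := by
  refine (_root_.intervalIntegrable_const (c := C)).mono_fun' hm.aestronglyMeasurable ?_
  filter_upwards [ae_restrict_mem measurableSet_uIoc] with t ht
  simpa [Real.norm_eq_abs] using hC t ht

lemma min_sq_le (K x y : ℝ) : (min K x - min K y) ^ 2 ≤ (x - y) ^ 2 := by
  rcases le_total K x with h1 | h1 <;> rcases le_total K y with h2 | h2
  · rw [min_eq_left h1, min_eq_left h2]
    simpa using sq_nonneg (x - y)
  · rw [min_eq_left h1, min_eq_right h2]; nlinarith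
  · rw [min_eq_right h1, min_eq_left h2]; nlinarith
  · rw [min_eq_right h1, min_eq_right h2]

noncomputable def myPhi (K : ℝ) (t : ℝ) : ℝ := min K (-Real.log t)

lemma myPhi_meas (K : ℝ) : Measurable (myPhi K) :=
  measurable_const.min Real.measurable_log.neg

lemma myPhi_mem {K t : ℝ} (hK : 0 ≤ K) (ht0 : 0 ≤ t) (ht1 : t ≤ 1) :
    0 ≤ myPhi K t ∧ myPhi K t ≤ K := by
  have hlog : Real.log t ≤ 0 := Real.log_nonpos ht0 ht1
  exact ⟨le_min hK (by linarith), min_le_left _ _⟩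

lemma myPhi_int {K c d : ℝ} (hK : 0 ≤ K) (hc : 0 ≤ c) (hcd : c ≤ d) (hd : d ≤ 1) :
    IntervalIntegrable (myPhi K) volume c d := by
  refine intInt_of_bdd (myPhi_meas K) (C := K) fun t ht => ?_
  rw [Set.uIoc_of_le hcd] at ht
  obtain ⟨h0, h1⟩ := myPhi_mem hK (hc.trans ht.1.le) (ht.2.trans hd)
  rw [abs_le]; constructor <;> linarith

lemma myPhi_sq_int {K c d : ℝ} (hK : 0 ≤ K) (hc : 0 ≤ c) (hcd : c ≤ d) (hd : d ≤ 1) :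
    IntervalIntegrable (fun t => myPhi K t ^ 2) volume c d := by
  refine intInt_of_bdd ((myPhi_meas K).pow_const 2) (C := K ^ 2) fun t ht => ?_
  rw [Set.uIoc_of_le hcd] at ht
  obtain ⟨h0, h1⟩ := myPhi_mem hK (hc.trans ht.1.le) (ht.2.trans hd)
  rw [abs_le]; constructor <;> nlinarith

lemma myPhi_var_le (K : ℝ) (hK : 0 ≤ K) {c d : ℝ} (hc : 0 ≤ c) (hcd : c < d) (hd : d ≤ 1) :
    intervalAvg c d (fun t => (myPhi K t - intervalAvg c d (myPhi K)) ^ 2) ≤ 1 := by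
  set L : ℝ := d - c with hLdef
  have hL0 : 0 < L := sub_pos.2 hcd
  have hlog := intInt_log' hc hcd.le hd
  have hsq := intInt_sqlog hc hcd.le
  have hphi := myPhi_int hK hc hcd.le hd
  have hphi2 := myPhi_sq_int hK hc hcd.le hd
  set S1 : ℝ := ∫ t in c..d, myPhi K t with hS1
  set S2 : ℝ := ∫ t in c..d, myPhi K t ^ 2 with hS2
  set A : ℝ := d - d * Real.log d - c + c * Real.log c with hA
  set B : ℝ := (d * Real.log d ^ 2 - 2 * (d * Real.log d) + 2 * d)
        - (c * Real.log c ^ 2 - 2 * (c * Real.log c) + 2 * c) with hB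
  set m : ℝ := A / L with hm
  set b : ℝ := min K m with hb
  have haK : intervalAvg c d (myPhi K) = S1 / L := by
    rw [intervalAvg, ← hS1, div_eq_inv_mul]
  have expand : ∀ β : ℝ, (∫ t in c..d, (myPhi K t - β) ^ 2) = S2 - 2 * β * S1 + β ^ 2 * L := by
    intro β
    have heq : (fun t => (myPhi K t - β) ^ 2)
        = fun t => myPhi K t ^ 2 + ((-(2 * β)) * myPhi K t + β ^ 2) := by
      funext t; ring
    rw [heq, intervalIntegral.integral_add hphi2 ((hphi.const_mul _).add _root_.intervalIntegrable_const),
      intervalIntegral.integral_add (hphi.const_mul _) _root_.intervalIntegrable_const,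
      intervalIntegral.integral_const_mul, intervalIntegral.integral_const]
    simp only [← hS1, ← hS2, smul_eq_mul]
    ring
  have hexpand_int : ∀ β : ℝ, IntervalIntegrable (fun t => (myPhi K t - β) ^ 2) volume c d := by
    intro β
    have heq : (fun t => (myPhi K t - β) ^ 2)
        = fun t => myPhi K t ^ 2 + ((-(2 * β)) * myPhi K t + β ^ 2) := by
      funext t; ring
    rw [heq]
    exact hphi2.add ((hphi.const_mul _).add _root_.intervalIntegrable_const)
  have hRHSint : IntervalIntegrable (fun t => Real.log t ^ 2 + 2 * m * Real.log t + m ^ 2)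
      volume c d := (hsq.add (hlog.const_mul _)).add _root_.intervalIntegrable_const
  have h2 : (∫ t in c..d, (myPhi K t - b) ^ 2)
      ≤ ∫ t in c..d, (Real.log t ^ 2 + 2 * m * Real.log t + m ^ 2) := by
    apply integral_mono_on hcd.le (hexpand_int b) hRHSint
    intro x _
    have hmin := min_sq_le K (-Real.log x) m
    calc (myPhi K x - b) ^ 2 ≤ (-Real.log x - m) ^ 2 := hmin
      _ = Real.log x ^ 2 + 2 * m * Real.log x + m ^ 2 := by ring
  have h3 : (∫ t in c..d, (Real.log t ^ 2 + 2 * m * Real.log t + m ^ 2)) ≤ L := by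
    rw [intervalIntegral.integral_add (hsq.add (hlog.const_mul _)) _root_.intervalIntegrable_const,
      intervalIntegral.integral_add hsq (hlog.const_mul _), intervalIntegral.integral_const_mul,
      integral_sqlog hc hcd.le, integral_log'' hc hcd.le hd, intervalIntegral.integral_const]
    have hmL : m * L = A := by rw [hm, div_mul_cancel₀ A hL0.ne']
    have hid : L ^ 2 + A ^ 2 - L * B = c * d * (Real.log d - Real.log c) ^ 2 := by
      simp only [hA, hB, hLdef]; ring
    have hnn : 0 ≤ c * d * (Real.log d - Real.log c) ^ 2 :=
      mul_nonneg (mul_nonneg hc (hc.trans hcd.le)) (sq_nonneg _)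
    have key : L * (B + 2 * m * (d * Real.log d - d - (c * Real.log c - c)) + m ^ 2 * L)
        = L * B - A ^ 2 := by
      have : d * Real.log d - d - (c * Real.log c - c) = -A := by rw [hA]; ring
      rw [this]
      calc L * (B + 2 * m * (-A) + m ^ 2 * L) = L * B - 2 * A * (m * L) + (m * L) ^ 2 := by ring
        _ = L * B - A ^ 2 := by rw [hmL]; ring
    have hfin : L * (B + 2 * m * (d * Real.log d - d - (c * Real.log c - c)) + m ^ 2 * L) ≤ L * L := by
      rw [key]; nlinarith
    have hfin2 := (mul_le_mul_iff_right₀ hL0).1 hfin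
    simp only [smul_eq_mul, hB, hLdef] at hfin2 ⊢
    linarith
  calc intervalAvg c d (fun t => (myPhi K t - intervalAvg c d (myPhi K)) ^ 2)
      = L⁻¹ * ∫ t in c..d, (myPhi K t - S1 / L) ^ 2 := by rw [intervalAvg, haK]
    _ = L⁻¹ * (S2 - 2 * (S1 / L) * S1 + (S1 / L) ^ 2 * L) := by rw [expand]
    _ ≤ L⁻¹ * (S2 - 2 * b * S1 + b ^ 2 * L) := by
        apply mul_le_mul_of_nonneg_left _ (inv_nonneg.2 hL0.le)
        have hkey : S2 - 2 * (S1 / L) * S1 + (S1 / L) ^ 2 * L = S2 - S1 ^ 2 / L := by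
          field_simp; ring
        rw [hkey]
        have : S1 ^ 2 / L - (2 * b * S1 - b ^ 2 * L) = (S1 - b * L) ^ 2 / L := by
          field_simp; ring
        nlinarith [sq_nonneg (S1 - b * L), div_nonneg (sq_nonneg (S1 - b * L)) hL0.le]
    _ = L⁻¹ * ∫ t in c..d, (myPhi K t - b) ^ 2 := by rw [expand]
    _ ≤ L⁻¹ * ∫ t in c..d, (Real.log t ^ 2 + 2 * m * Real.log t + m ^ 2) := by
        exact mul_le_mul_of_nonneg_left h2 (inv_nonneg.2 hL0.le)
    _ ≤ L⁻¹ * L := mul_le_mul_of_nonneg_left h3 (inv_nonneg.2 hL0.le)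
    _ = 1 := inv_mul_cancel₀ hL0.ne'

lemma myPhi_eq_K {K t : ℝ} (ht0 : 0 < t) (ht : t ≤ Real.exp (-K)) : myPhi K t = K := by
  have : Real.log t ≤ -K := by
    calc Real.log t ≤ Real.log (Real.exp (-K)) := Real.log_le_log ht0 ht
      _ = -K := Real.log_exp _
  exact min_eq_left (by linarith)

lemma myPhi_eq_log {K t : ℝ} (ht0 : Real.exp (-K) ≤ t) : myPhi K t = -Real.log t := by
  have h0 : (0:ℝ) < Real.exp (-K) := Real.exp_pos _
  have : -K ≤ Real.log t := by
    calc -K = Real.log (Real.exp (-K)) := (Real.log_exp _).symm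
      _ ≤ Real.log t := Real.log_le_log h0 ht0
  exact min_eq_right (by linarith)

lemma exp_le_one' {K : ℝ} (hK : 0 < K) : Real.exp (-K) ≤ 1 :=
  Real.exp_le_one_iff.mpr (by linarith)

lemma myPhi_avg {K : ℝ} (hK : 0 < K) : intervalAvg 0 1 (myPhi K) = 1 - Real.exp (-K) := by
  set r : ℝ := Real.exp (-K) with hr
  have hr0 : 0 < r := Real.exp_pos _
  have hr1 : r ≤ 1 := exp_le_one' hK
  have hint1 : IntervalIntegrable (myPhi K) volume 0 r := myPhi_int hK.le le_rfl hr0.le hr1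
  have hint2 : IntervalIntegrable (myPhi K) volume r 1 := myPhi_int hK.le hr0.le hr1 le_rfl
  have hsplit := integral_add_adjacent_intervals hint1 hint2
  have e1 : ∫ t in (0:ℝ)..r, myPhi K t = K * r := by
    rw [integral_congr_ae' (g := fun _ => K) (Filter.Eventually.of_forall fun x hx =>
        myPhi_eq_K hx.1 hx.2) (Filter.Eventually.of_forall fun x hx =>
        absurd hx (by simp [Set.Ioc_eq_empty_iff.mpr]; intro h; linarith [hr0]))]
    simp [intervalIntegral.integral_const, mul_comm, hr]
  have e2 : ∫ t in r..(1:ℝ), myPhi K t = 1 - r - r * K := by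
    rw [integral_congr (g := fun t => -Real.log t) fun x hx => by
      rw [Set.uIcc_of_le hr1] at hx
      exact myPhi_eq_log hx.1]
    rw [intervalIntegral.integral_neg, integral_log'' hr0.le hr1 le_rfl]
    simp only [Real.log_one, hr, Real.log_exp]
    ring
  rw [intervalAvg, ← hsplit, e1, e2]
  ring

lemma myPhi_exp_lb {K : ℝ} (hK : 0 < K) :
    Real.exp (-1) * (1 + K)
      ≤ ∫ t in (0:ℝ)..1, Real.exp |myPhi K t - intervalAvg 0 1 (myPhi K)| := by
  set r : ℝ := Real.exp (-K) with hr
  have hr0 : 0 < r := Real.exp_pos _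
  have hr1 : r ≤ 1 := exp_le_one' hK
  rw [myPhi_avg hK, ← hr]
  have hbd : ∀ t ∈ Set.uIoc (0:ℝ) 1, |myPhi K t - (1 - r)| ≤ K + 1 := by
    intro t ht
    rw [Set.uIoc_of_le zero_le_one] at ht
    obtain ⟨h0, h1⟩ := myPhi_mem hK.le ht.1.le ht.2
    rw [abs_le]
    constructor <;> linarith
  have hmeas1 : Measurable fun t => Real.exp (myPhi K t - (1 - r)) :=
    Real.measurable_exp.comp ((myPhi_meas K).sub measurable_const)
  have hmeas2 : Measurable fun t => Real.exp |myPhi K t - (1 - r)| :=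
    Real.measurable_exp.comp ((myPhi_meas K).sub measurable_const).abs
  have hint1 : IntervalIntegrable (fun t => Real.exp (myPhi K t - (1 - r))) volume 0 1 := by
    refine intInt_of_bdd hmeas1 (C := Real.exp (K + 1)) fun t ht => ?_
    rw [abs_of_pos (Real.exp_pos _)]
    exact Real.exp_le_exp.mpr (le_trans (le_abs_self _) (hbd t ht))
  have hint2 : IntervalIntegrable (fun t => Real.exp |myPhi K t - (1 - r)|) volume 0 1 := by
    refine intInt_of_bdd hmeas2 (C := Real.exp (K + 1)) fun t ht => ?_
    rw [abs_of_pos (Real.exp_pos _)]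
    exact Real.exp_le_exp.mpr (hbd t ht)
  have hmono : (∫ t in (0:ℝ)..1, Real.exp (myPhi K t - (1 - r)))
      ≤ ∫ t in (0:ℝ)..1, Real.exp |myPhi K t - (1 - r)| :=
    integral_mono_on zero_le_one hint1 hint2 fun x _ => Real.exp_le_exp.mpr (le_abs_self _)
  -- compute ∫ exp (φ - (1 - r))
  have hi1 : IntervalIntegrable (fun t => Real.exp (myPhi K t)) volume 0 r := by
    refine intInt_of_bdd ((myPhi_meas K).exp) (C := Real.exp K)
      fun t ht => ?_
    rw [Set.uIoc_of_le hr0.le] at ht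
    obtain ⟨h0, h1⟩ := myPhi_mem hK.le ht.1.le (ht.2.trans hr1)
    rw [abs_of_pos (Real.exp_pos _)]
    exact Real.exp_le_exp.mpr h1
  have hi2 : IntervalIntegrable (fun t => Real.exp (myPhi K t)) volume r 1 := by
    refine intInt_of_bdd ((myPhi_meas K).exp) (C := Real.exp K)
      fun t ht => ?_
    rw [Set.uIoc_of_le hr1] at ht
    obtain ⟨h0, h1⟩ := myPhi_mem hK.le (hr0.trans ht.1).le ht.2
    rw [abs_of_pos (Real.exp_pos _)]
    exact Real.exp_le_exp.mpr h1
  have e1 : ∫ t in (0:ℝ)..r, Real.exp (myPhi K t) = 1 := by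
    rw [integral_congr_ae' (g := fun _ => Real.exp K) (Filter.Eventually.of_forall fun x hx =>
        by rw [myPhi_eq_K hx.1 hx.2]) (Filter.Eventually.of_forall fun x hx =>
        absurd hx (by simp [Set.Ioc_eq_empty_iff.mpr]; intro h; linarith [hr0]))]
    rw [intervalIntegral.integral_const, smul_eq_mul, sub_zero, hr, ← Real.exp_add]
    simp
  have e2 : ∫ t in r..(1:ℝ), Real.exp (myPhi K t) = K := by
    rw [integral_congr (g := fun t => t⁻¹) fun x hx => by
      rw [Set.uIcc_of_le hr1] at hx
      rw [myPhi_eq_log hx.1, Real.exp_neg, Real.exp_log (hr0.trans_le hx.1)]]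
    rw [integral_inv (by rw [Set.uIcc_of_le hr1]; intro h; linarith [h.1])]
    rw [hr, one_div, Real.log_inv, Real.log_exp, neg_neg]
  have hsplitv : ∫ t in (0:ℝ)..1, Real.exp (myPhi K t) = 1 + K := by
    rw [← integral_add_adjacent_intervals hi1 hi2, e1, e2]
  have hprod : (∫ t in (0:ℝ)..1, Real.exp (myPhi K t - (1 - r)))
      = (1 + K) * Real.exp (-(1 - r)) := by
    have heq : (fun t => Real.exp (myPhi K t - (1 - r)))
        = fun t => Real.exp (myPhi K t) * Real.exp (-(1 - r)) := by
      funext t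
      rw [← Real.exp_add]
      ring_nf
    rw [heq, intervalIntegral.integral_mul_const, hsplitv]
  have hfinal : Real.exp (-1) * (1 + K) ≤ (1 + K) * Real.exp (-(1 - r)) := by
    have h1 : Real.exp (-1) ≤ Real.exp (-(1 - r)) := Real.exp_le_exp.mpr (by linarith)
    nlinarith [Real.exp_pos (-1), Real.exp_pos (-(1 - r))]
  calc Real.exp (-1) * (1 + K) ≤ (1 + K) * Real.exp (-(1 - r)) := hfinal
    _ = ∫ t in (0:ℝ)..1, Real.exp (myPhi K t - (1 - r)) := hprod.symm
    _ ≤ _ := hmono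

end JNhelpers

/-- For `ε ≥ 1` the supremum of `⟨exp|φ − ⟨φ⟩|⟩` over `φ ∈ BMO_ε([0,1])`
is infinite: for every `M > 0` there is `φ ∈ BMO_ε([0,1])` with
`⟨exp|φ − ⟨φ⟩|⟩ > M`. -/
theorem symmetric_JN_blowup (ε : ℝ) (hε : 1 ≤ ε) (M : ℝ) (hM : 0 < M) :
    ∃ φ : ℝ → ℝ, MemBMO ε 0 1 φ ∧
      M < intervalAvg 0 1 (fun t => Real.exp |φ t - intervalAvg 0 1 φ|) := by
  set K : ℝ := 3 * M with hKdef
  have hK : 0 < K := by positivity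
  refine ⟨myPhi K, ⟨?_, ?_, ?_⟩, ?_⟩
  · refine Measure.integrableOn_of_bounded (M := K) (measure_Icc_lt_top).ne
      (myPhi_meas K).aestronglyMeasurable ?_
    filter_upwards [ae_restrict_mem measurableSet_Icc] with t ht
    obtain ⟨h0, h1⟩ := myPhi_mem hK.le ht.1 ht.2
    rw [Real.norm_eq_abs, abs_le]
    constructor <;> linarith
  · refine Measure.integrableOn_of_bounded (M := K ^ 2) (measure_Icc_lt_top).ne
      ((myPhi_meas K).pow_const 2).aestronglyMeasurable ?_
    filter_upwards [ae_restrict_mem measurableSet_Icc] with t ht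
    obtain ⟨h0, h1⟩ := myPhi_mem hK.le ht.1 ht.2
    rw [Real.norm_eq_abs, abs_le]
    constructor <;> nlinarith
  · intro c d hc hcd hd
    exact (myPhi_var_le K hK.le hc hcd hd).trans (by nlinarith)
  · have hlb := myPhi_exp_lb hK
    have havg : intervalAvg 0 1 (fun t => Real.exp |myPhi K t - intervalAvg 0 1 (myPhi K)|)
        = ∫ t in (0:ℝ)..1, Real.exp |myPhi K t - intervalAvg 0 1 (myPhi K)| := by
      rw [intervalAvg]
      norm_num
    rw [havg]
    refine lt_of_lt_of_le ?_ hlb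
    have he3 : Real.exp 1 < 3 := by
      have := Real.exp_one_lt_d9
      norm_num at this ⊢
      linarith
    have hprod : Real.exp (-1) * Real.exp 1 = 1 := by
      rw [← Real.exp_add]
      norm_num
    have h13 : 1 < 3 * Real.exp (-1) := by
      nlinarith [Real.exp_pos 1, Real.exp_pos (-1)]
    rw [hKdef]
    nlinarith [Real.exp_pos (-1)]
end

section
/- Let ε ∈ (0, 1/2) and set α = ε + (ε/(1+ε))(log(1−ε) − log(2ε²)). Then for every real s with 0 ≤ s ≤ α − ε, one has exp(s·(1+ε)/ε) ≤ (1−ε)/(2ε²) ≤ 1/ε²; consequently, for (x₁,x₂) ∈ Ω_ε with x₁ ≥ 0 and 0 ≤ x₁ − β ≤ α − ε where β = √(ε² + x₁² − x₂), the inequality exp(x₁ − β + ε) ≤ (1/ε²)·exp(−(x₁ − β)/ε + ε) holds (this expresses that ∂²g₂/∂x₂² ≤ 0 for the candidate Bellman function on Ω²_ε). -/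
open MeasureTheory Real

/-- The concavity inequality `∂²g₂/∂x₂² ≤ 0` for the candidate Bellman
function on `Ω²_ε`, `ε ∈ (0, 1/2)`. -/
theorem candidate_concavity_omega2 (ε α : ℝ) (hε0 : 0 < ε) (hε : ε < 1 / 2)
    (hα : α = ε + ε / (1 + ε) * (Real.log (1 - ε) - Real.log (2 * ε ^ 2))) :
    (∀ s : ℝ, 0 ≤ s → s ≤ α - ε →
      Real.exp (s * (1 + ε) / ε) ≤ (1 - ε) / (2 * ε ^ 2) ∧
        (1 - ε) / (2 * ε ^ 2) ≤ 1 / ε ^ 2) ∧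
    (∀ x₁ x₂ β : ℝ, β = Real.sqrt (ε ^ 2 + x₁ ^ 2 - x₂) →
      x₁ ^ 2 ≤ x₂ → x₂ ≤ x₁ ^ 2 + ε ^ 2 → 0 ≤ x₁ →
      0 ≤ x₁ - β → x₁ - β ≤ α - ε →
      Real.exp (x₁ - β + ε) ≤ 1 / ε ^ 2 * Real.exp (-(x₁ - β) / ε + ε)) := by
  have h1ε : (0:ℝ) < 1 - ε := by linarith
  have h2ε : (0:ℝ) < 2 * ε ^ 2 := by positivity
  have h1pε : (0:ℝ) < 1 + ε := by linarith
  have hQ : (0:ℝ) < (1 - ε) / (2 * ε ^ 2) := by positivity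
  have key : ∀ s : ℝ, 0 ≤ s → s ≤ α - ε →
      Real.exp (s * (1 + ε) / ε) ≤ (1 - ε) / (2 * ε ^ 2) ∧
        (1 - ε) / (2 * ε ^ 2) ≤ 1 / ε ^ 2 := by
    intro s _ hs2
    constructor
    · have hlog : Real.log (1 - ε) - Real.log (2 * ε ^ 2)
          = Real.log ((1 - ε) / (2 * ε ^ 2)) :=
        (Real.log_div h1ε.ne' h2ε.ne').symm
      have hαε : α - ε = ε / (1 + ε) * Real.log ((1 - ε) / (2 * ε ^ 2)) := by
        rw [hα, hlog]; ring
      have hmul : s * (1 + ε) / ε ≤ Real.log ((1 - ε) / (2 * ε ^ 2)) := by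
        rw [hαε] at hs2
        rw [div_le_iff₀ hε0]
        have := mul_le_mul_of_nonneg_left hs2 (le_of_lt h1pε)
        calc s * (1 + ε) = (1 + ε) * s := by ring
          _ ≤ (1 + ε) * (ε / (1 + ε) * Real.log ((1 - ε) / (2 * ε ^ 2))) := this
          _ = Real.log ((1 - ε) / (2 * ε ^ 2)) * ε := by
              field_simp
      calc Real.exp (s * (1 + ε) / ε)
          ≤ Real.exp (Real.log ((1 - ε) / (2 * ε ^ 2))) := Real.exp_le_exp.mpr hmul
        _ = (1 - ε) / (2 * ε ^ 2) := Real.exp_log hQ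
    · rw [div_le_div_iff₀ h2ε (by positivity : (0:ℝ) < ε ^ 2)]
      nlinarith [sq_nonneg ε]
  refine ⟨key, ?_⟩
  intro x₁ x₂ β hβ h₁ h₂ hx₁ hs0 hs1
  obtain ⟨hA, hB⟩ := key (x₁ - β) hs0 hs1
  have hE : Real.exp ((x₁ - β) * (1 + ε) / ε) ≤ 1 / ε ^ 2 := le_trans hA hB
  have hrw : x₁ - β + ε = ((x₁ - β) * (1 + ε) / ε) + (-(x₁ - β) / ε + ε) := by
    field_simp; ring
  rw [hrw, Real.exp_add]
  exact mul_le_mul_of_nonneg_right hE (Real.exp_nonneg _)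
end

section
/- Let ε > 0 and let (x₁, x₂) satisfy 0 < x₂ ≤ ε² and x₁² ≤ x₂. Define φ : [0,1] → ℝ by φ(t) = √x₂ for 0 ≤ t ≤ (x₁ + √x₂)/(2√x₂) and φ(t) = −√x₂ otherwise. Then φ ∈ BMO_ε([0,1]), ⟨φ⟩_{[0,1]} = x₁, ⟨φ²⟩_{[0,1]} = x₂, and ⟨e^{|φ|}⟩_{[0,1]} = e^{√x₂}. -/
open MeasureTheory Real

/-- The two-valued optimizer on the region `Ω¹_ε`. -/
theorem optimizer_omega1 (ε x₁ x₂ : ℝ) (hε0 : 0 < ε)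
    (h0 : 0 < x₂) (h1 : x₂ ≤ ε ^ 2) (h2 : x₁ ^ 2 ≤ x₂)
    (φ : ℝ → ℝ)
    (hφ : ∀ t : ℝ, φ t =
      if t ≤ (x₁ + Real.sqrt x₂) / (2 * Real.sqrt x₂) then Real.sqrt x₂
      else -Real.sqrt x₂) :
    MemBMO ε 0 1 φ ∧
      intervalAvg 0 1 φ = x₁ ∧ intervalAvg 0 1 (fun t => (φ t) ^ 2) = x₂ ∧
      intervalAvg 0 1 (fun t => Real.exp |φ t|) = Real.exp (Real.sqrt x₂) := by

  set s := Real.sqrt x₂ with hsdef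
  have hs : 0 < s := Real.sqrt_pos.mpr h0
  have hs2 : s ^ 2 = x₂ := Real.sq_sqrt h0.le
  set p := (x₁ + s) / (2 * s) with hpdef
  have hx1le : x₁ ≤ s := by nlinarith
  have hx1ge : -s ≤ x₁ := by nlinarith
  have hp0 : 0 ≤ p := div_nonneg (by linarith) (by linarith)
  have hp1 : p ≤ 1 := by
    rw [hpdef, div_le_one (by linarith)]; linarith
  have hφsq : ∀ t, (φ t) ^ 2 = x₂ := by
    intro t; rw [hφ t]; split <;> simp [neg_pow, hs2]
  have hφabs : ∀ t, |φ t| = s := by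
    intro t; rw [hφ t]; split
    · exact abs_of_nonneg hs.le
    · rw [abs_neg]; exact abs_of_nonneg hs.le
  have hmeas : Measurable φ := by
    have : φ = fun t => if t ≤ p then s else -s := funext hφ
    rw [this]
    exact Measurable.ite measurableSet_Iic measurable_const measurable_const
  have hint : ∀ u v : ℝ, IntervalIntegrable φ volume u v := by
    intro u v
    rw [intervalIntegrable_iff]
    have hc : IntegrableOn (fun _ : ℝ => s) (Set.uIoc u v) volume := by
      rw [Set.uIoc]; exact (integrableOn_const_iff).mpr (Or.inr measure_Ioc_lt_top)
    exact hc.mono' hmeas.aestronglyMeasurable.restrict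
      (ae_of_all _ fun t => by rw [Real.norm_eq_abs, hφabs t])
  have hI : ∫ t in (0:ℝ)..1, φ t = x₁ := by
    have h1' : ∫ t in (0:ℝ)..p, φ t = p * s := by
      rw [intervalIntegral.integral_congr (g := fun _ => s) ?_,
        intervalIntegral.integral_const]
      · simp [mul_comm]
      · intro t ht
        rw [Set.uIcc_of_le hp0] at ht
        rw [hφ t, if_pos ht.2]
    have h2' : ∫ t in p..1, φ t = (1 - p) * (-s) := by
      rw [intervalIntegral.integral_congr_ae (g := fun _ => -s) ?_,
        intervalIntegral.integral_const]
      · simp [mul_comm]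
      · refine ae_of_all _ fun t ht => ?_
        rw [Set.uIoc_of_le hp1] at ht
        rw [hφ t, if_neg (not_le.mpr ht.1)]
    rw [← intervalIntegral.integral_add_adjacent_intervals (hint 0 p) (hint p 1),
      h1', h2', hpdef]
    field_simp
    ring
  refine ⟨⟨?_, ?_, ?_⟩, ?_, ?_, ?_⟩
  · have hc : IntegrableOn (fun _ : ℝ => s) (Set.Icc (0:ℝ) 1) volume :=
      (integrableOn_const_iff).mpr (Or.inr measure_Icc_lt_top)
    exact hc.mono' hmeas.aestronglyMeasurable.restrict
      (ae_of_all _ fun t => by rw [Real.norm_eq_abs, hφabs t])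
  · have : (fun t => (φ t) ^ 2) = fun _ : ℝ => x₂ := funext hφsq
    rw [this]
    exact (integrableOn_const_iff).mpr (Or.inr measure_Icc_lt_top)
  · intro c d hc hcd hd
    set m := intervalAvg c d φ with hm
    have hδ : 0 < d - c := by linarith
    have hIcd : ∫ t in c..d, (fun t => (φ t - m) ^ 2) t
        = (d - c) * (x₂ + m ^ 2) - 2 * m * ∫ t in c..d, φ t := by
      have hcongr : ∀ t ∈ Set.uIcc c d, (φ t - m) ^ 2 = (x₂ + m ^ 2) - 2 * m * φ t := by
        intro t _
        have := hφsq t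
        nlinarith [hφsq t]
      rw [intervalIntegral.integral_congr hcongr,
        intervalIntegral.integral_sub intervalIntegrable_const ((hint c d).const_mul _),
        intervalIntegral.integral_const, intervalIntegral.integral_const_mul]
      simp [smul_eq_mul]
    have hmI : m = (d - c)⁻¹ * ∫ t in c..d, φ t := rfl
    have key : intervalAvg c d (fun t => (φ t - m) ^ 2) = x₂ - m ^ 2 := by
      rw [intervalAvg, hIcd]
      have : (∫ t in c..d, φ t) = (d - c) * m := by
        rw [hmI]; field_simp
      rw [this]
      field_simp
      ring
    rw [key]
    nlinarith [sq_nonneg m]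
  · rw [intervalAvg, hI]; norm_num
  · have : (fun t => (φ t) ^ 2) = fun _ : ℝ => x₂ := funext hφsq
    rw [intervalAvg, this, intervalIntegral.integral_const]
    norm_num
  · have : (fun t => Real.exp |φ t|) = fun _ : ℝ => Real.exp s := by
      funext t; rw [hφabs t]
    rw [intervalAvg, this, intervalIntegral.integral_const]
    norm_num
end

section
/- Let ε ∈ (1/2, 1) and define φ : [0,1] → ℝ by φ(t) = −ε·log((2ε−1)/(4εt)) − 1 + ε for t ∈ [0, (2ε−1)/(4ε)], φ(t) = −1 + ε for t ∈ [(2ε−1)/(4ε), 1/2], φ(t) = 1 − ε for t ∈ (1/2, (2ε+1)/(4ε)], and φ(t) = ε·log((2ε−1)/(4ε(1−t))) + 1 − ε for t ∈ [(2ε+1)/(4ε), 1]. Then φ ∈ BMO_ε([0,1]), ⟨φ⟩_{[0,1]} = 0, ⟨φ²⟩_{[0,1]} = ε², and ⟨e^{|φ|}⟩_{[0,1]} = e^{1−ε}/(2 − 2ε). -/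
set_option maxHeartbeats 1000000

open MeasureTheory Real Set intervalIntegral

noncomputable def Alog (t : ℝ) : ℝ := t * Real.log t - t

noncomputable def Alog2 (t : ℝ) : ℝ :=
  (2 * (Real.sqrt t * Real.log (Real.sqrt t)) - Real.sqrt t) ^ 2 + t

lemma continuous_Alog : Continuous Alog :=
  Real.continuous_mul_log.sub continuous_id

lemma continuous_Alog2 : Continuous Alog2 := by
  apply Continuous.add _ continuous_id
  exact ((continuous_const.mul (Real.continuous_mul_log.comp Real.continuous_sqrt)).sub
    Real.continuous_sqrt).pow 2

lemma Alog_zero : Alog 0 = 0 := by simp [Alog]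

lemma Alog2_zero : Alog2 0 = 0 := by simp [Alog2]

lemma Alog2_eq {t : ℝ} (ht : 0 < t) :
    Alog2 t = t * (Real.log t) ^ 2 - 2 * (t * Real.log t) + 2 * t := by
  have h : Real.sqrt t ^ 2 = t := Real.sq_sqrt ht.le
  rw [Alog2, Real.log_sqrt ht.le]
  linear_combination (Real.log t - 1) ^ 2 * h

lemma hasDerivAt_Alog {t : ℝ} (ht : 0 < t) : HasDerivAt Alog (Real.log t) t := by
  have h := (Real.hasDerivAt_mul_log ht.ne').fun_sub (hasDerivAt_id t)
  exact h.congr_deriv (by ring)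

lemma hasDerivAt_Alog2 {t : ℝ} (ht : 0 < t) : HasDerivAt Alog2 ((Real.log t) ^ 2) t := by
  have h1 : HasDerivAt (fun x : ℝ => x * Real.log x ^ 2 - 2 * (x * Real.log x) + 2 * x)
      ((Real.log t) ^ 2) t := by
    have hl : HasDerivAt Real.log t⁻¹ t := Real.hasDerivAt_log ht.ne'
    have h2 : HasDerivAt (fun x : ℝ => Real.log x ^ 2) (2 * Real.log t * t⁻¹) t := by
      simpa using hl.fun_pow 2
    have h3 : HasDerivAt (fun x : ℝ => x * Real.log x ^ 2)
        (1 * Real.log t ^ 2 + t * (2 * Real.log t * t⁻¹)) t := (hasDerivAt_id t).mul h2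
    have h4 := ((h3.fun_sub ((Real.hasDerivAt_mul_log ht.ne').const_mul 2)).fun_add
      ((hasDerivAt_id t).const_mul 2))
    refine h4.congr_deriv ?_
    field_simp
    ring
  have he : Alog2 =ᶠ[nhds t] fun x => x * Real.log x ^ 2 - 2 * (x * Real.log x) + 2 * x :=
    Filter.eventually_of_mem (Ioi_mem_nhds ht) fun x hx => Alog2_eq hx
  exact HasDerivAt.congr_of_eventuallyEq h1 he

lemma Alog_eq (t : ℝ) : Alog t = t * Real.log t - t := rfl

lemma Alog2_eq2 {t : ℝ} (ht : 0 ≤ t) :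
    Alog2 t = t * (Real.log t) ^ 2 - 2 * (t * Real.log t) + 2 * t := by
  rcases eq_or_lt_of_le ht with h | h
  · rw [← h, Alog2_zero]; norm_num
  · exact Alog2_eq h


lemma intInt_log {u v : ℝ} (hu : 0 ≤ u) (huv : u ≤ v) (hv : v ≤ 1) :
    IntervalIntegrable Real.log volume u v := by
  have h : IntervalIntegrable (fun t => -Real.log t) volume u v := by
    apply intervalIntegrable_deriv_of_nonneg (g := fun t => -Alog t)
    · exact (continuous_Alog.neg).continuousOn
    · intro x hx
      rw [min_eq_left huv, max_eq_right huv] at hx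
      exact (hasDerivAt_Alog (hu.trans_lt hx.1)).neg
    · intro x hx
      rw [min_eq_left huv, max_eq_right huv] at hx
      simpa using Real.log_nonpos (hu.trans hx.1.le) (hx.2.le.trans hv)
  have h2 := h.neg
  have he : (-fun t => -Real.log t) = Real.log := by funext t; simp
  rwa [he] at h2

lemma intInt_logsq {u v : ℝ} (hu : 0 ≤ u) (huv : u ≤ v) :
    IntervalIntegrable (fun t => (Real.log t) ^ 2) volume u v := by
  apply intervalIntegrable_deriv_of_nonneg (g := Alog2)
  · exact continuous_Alog2.continuousOn
  · intro x hx
    rw [min_eq_left huv, max_eq_right huv] at hx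
    exact hasDerivAt_Alog2 (hu.trans_lt hx.1)
  · intro x hx; positivity

lemma intval_log {u v : ℝ} (hu : 0 ≤ u) (huv : u ≤ v) (hv : v ≤ 1) :
    ∫ t in u..v, Real.log t = Alog v - Alog u := by
  apply integral_eq_sub_of_hasDeriv_right_of_le huv continuous_Alog.continuousOn
  · exact fun x hx => (hasDerivAt_Alog (hu.trans_lt hx.1)).hasDerivWithinAt
  · exact intInt_log hu huv hv

lemma intval_logsq {u v : ℝ} (hu : 0 ≤ u) (huv : u ≤ v) :
    ∫ t in u..v, (Real.log t) ^ 2 = Alog2 v - Alog2 u := by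
  apply integral_eq_sub_of_hasDeriv_right_of_le huv continuous_Alog2.continuousOn
  · exact fun x hx => (hasDerivAt_Alog2 (hu.trans_lt hx.1)).hasDerivWithinAt
  · exact intInt_logsq hu huv



lemma var_log {u v : ℝ} (hu : 0 ≤ u) (huv : u < v) (hv : v ≤ 1) :
    (v - u) * (∫ t in u..v, (Real.log t) ^ 2) - (∫ t in u..v, Real.log t) ^ 2
      ≤ (v - u) ^ 2 := by
  rw [intval_log hu huv.le hv, intval_logsq hu huv.le]
  rcases eq_or_lt_of_le hu with h0 | h0
  · have hv0 : 0 < v := lt_of_le_of_lt hu huv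
    rw [← h0, Alog_zero, Alog2_zero, Alog2_eq hv0]
    simp only [Alog, sub_zero]
    nlinarith [sq_nonneg (Real.log v)]
  · have hv0 : 0 < v := h0.trans huv
    rw [Alog2_eq h0, Alog2_eq hv0]
    simp only [Alog]
    nlinarith [mul_nonneg (mul_nonneg h0.le hv0.le) (sq_nonneg (Real.log v - Real.log u))]

lemma avg_expand {c d : ℝ} (h : c < d) (f : ℝ → ℝ)
    (hf : IntervalIntegrable f volume c d)
    (hf2 : IntervalIntegrable (fun t => f t ^ 2) volume c d) (m : ℝ) :
    intervalAvg c d (fun t => (f t - m) ^ 2) =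
      intervalAvg c d (fun t => f t ^ 2) - 2 * m * intervalAvg c d f + m ^ 2 := by
  have hd : d - c ≠ 0 := sub_ne_zero.2 h.ne'
  have e1 : (fun t => (f t - m) ^ 2) = fun t => (f t ^ 2 - (2 * m) * f t) + m ^ 2 := by
    funext t; ring
  rw [intervalAvg, e1, intervalIntegral.integral_add (hf2.sub (hf.const_mul (2*m)))
      (intervalIntegrable_const), intervalIntegral.integral_sub hf2 (hf.const_mul (2*m)),
      intervalIntegral.integral_const_mul, intervalIntegral.integral_const]
  rw [intervalAvg, intervalAvg]
  field_simp
  ring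

lemma var_le {c d : ℝ} (h : c < d) (f : ℝ → ℝ)
    (hf : IntervalIntegrable f volume c d)
    (hf2 : IntervalIntegrable (fun t => f t ^ 2) volume c d) (m : ℝ) :
    intervalAvg c d (fun t => (f t - intervalAvg c d f) ^ 2) ≤
      intervalAvg c d (fun t => (f t - m) ^ 2) := by
  rw [avg_expand h f hf hf2 m, avg_expand h f hf hf2 (intervalAvg c d f)]
  nlinarith [sq_nonneg (intervalAvg c d f - m)]

lemma min_lipschitz (x y K : ℝ) : |min x K - min y K| ≤ |x - y| := by
  rcases le_total x K with h1 | h1 <;> rcases le_total y K with h2 | h2 <;>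
    simp [min_eq_left, min_eq_right, h1, h2, abs_le] <;> cases abs_cases (x - y) <;>
    constructor <;> linarith [abs_nonneg (x - y), le_abs_self (x - y), neg_abs_le (x - y)]


noncomputable def AA (ε : ℝ) : ℝ := (2 * ε - 1) / (4 * ε)

section Main
variable {ε : ℝ} (hε0 : 1 / 2 < ε) (hε1 : ε < 1) {φ : ℝ → ℝ}
  (hφ : ∀ t : ℝ, φ t =
      if t ≤ (2 * ε - 1) / (4 * ε) then
        -ε * Real.log ((2 * ε - 1) / (4 * ε * t)) - 1 + ε
      else if t ≤ 1 / 2 then -1 + ε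
      else if t ≤ (2 * ε + 1) / (4 * ε) then 1 - ε
      else ε * Real.log ((2 * ε - 1) / (4 * ε * (1 - t))) + 1 - ε)

include hε0 hε1

lemma eps_pos : 0 < ε := by linarith
lemma AA_pos : 0 < AA ε := div_pos (by linarith) (by linarith)
lemma AA_lt_half : AA ε < 1 / 2 := by
  rw [AA, div_lt_iff₀ (by linarith : (0:ℝ) < 4 * ε)]; linarith
lemma one_sub_AA : (2 * ε + 1) / (4 * ε) = 1 - AA ε := by
  rw [AA]; field_simp; ring

include hφ

lemma F1 {t : ℝ} (ht : 0 < t) (ht2 : t ≤ AA ε) :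
    φ t = ε * Real.log t - ε * Real.log (AA ε) - (1 - ε) := by
  rw [hφ t, if_pos (show t ≤ (2 * ε - 1) / (4 * ε) from ht2)]
  have h1 : (2 * ε - 1) / (4 * ε * t) = AA ε / t := by rw [AA, div_div]
  rw [h1, Real.log_div (AA_pos hε0 hε1).ne' ht.ne']
  ring

lemma F2 {t : ℝ} (ht : AA ε ≤ t) (ht2 : t ≤ 1 / 2) : φ t = -(1 - ε) := by
  by_cases h : t ≤ (2 * ε - 1) / (4 * ε)
  · have : t = AA ε := le_antisymm h ht
    subst this
    rw [hφ, if_pos h]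
    have h1 : (2 * ε - 1) / (4 * ε * AA ε) = 1 := by
      rw [AA]
      have h4 : (4:ℝ) * ε ≠ 0 := by linarith
      have h5 : (2:ℝ) * ε - 1 ≠ 0 := by linarith
      field_simp
    rw [h1, Real.log_one]; ring
  · rw [hφ t, if_neg h, if_pos ht2]; ring

lemma F3 {s : ℝ} (hs : 0 < s) (hs2 : s < 1 / 2) : φ (1 - s) = -φ s := by
  have hA2 := AA_lt_half hε0 hε1
  have h1 : ¬(1 - s ≤ (2 * ε - 1) / (4 * ε)) := by
    rw [show (2 * ε - 1) / (4 * ε) = AA ε from rfl]; push_neg; linarith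
  have h2 : ¬(1 - s ≤ 1 / 2) := by push_neg; linarith
  rcases lt_or_ge s (AA ε) with h | h
  · have h3 : ¬(1 - s ≤ (2 * ε + 1) / (4 * ε)) := by
      rw [one_sub_AA hε0 hε1]; push_neg; linarith
    rw [hφ (1 - s), if_neg h1, if_neg h2, if_neg h3, hφ s,
      if_pos (show s ≤ (2 * ε - 1) / (4 * ε) from h.le)]
    have h4 : 1 - (1 - s) = s := by ring
    rw [h4]; ring
  · have h3 : 1 - s ≤ (2 * ε + 1) / (4 * ε) := by
      rw [one_sub_AA hε0 hε1]; linarith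
    rw [hφ (1 - s), if_neg h1, if_neg h2, if_pos h3, F2 hε0 hε1 hφ h hs2.le]
    ring

lemma phi_zero : φ 0 = -(1 - ε) := by
  rw [hφ 0, if_pos (show (0:ℝ) ≤ (2 * ε - 1) / (4 * ε) from (AA_pos hε0 hε1).le)]
  norm_num
  ring

lemma phi_one : φ 1 = 1 - ε := by
  have h1 : ¬((1:ℝ) ≤ (2 * ε - 1) / (4 * ε)) := by
    push_neg; calc (2 * ε - 1) / (4 * ε) < 1/2 := AA_lt_half hε0 hε1
    _ < 1 := by norm_num
  have h2 : ¬((1:ℝ) ≤ 1 / 2) := by norm_num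
  have h3 : ¬((1:ℝ) ≤ (2 * ε + 1) / (4 * ε)) := by
    rw [one_sub_AA hε0 hε1]; push_neg; linarith [AA_pos hε0 hε1]
  rw [hφ 1, if_neg h1, if_neg h2, if_neg h3]
  norm_num

lemma F4 {s : ℝ} (hs : 0 ≤ s) (hs2 : s ≤ 1 / 2) : φ (1 - s) ^ 2 = φ s ^ 2 := by
  rcases eq_or_lt_of_le hs with h0 | h0
  · rw [← h0]; norm_num
    rw [phi_one hε0 hε1 hφ, phi_zero hε0 hε1 hφ]; ring
  rcases eq_or_lt_of_le hs2 with h1 | h1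
  · rw [h1]; norm_num
  · rw [F3 hε0 hε1 hφ h0 h1]; ring

lemma F5 {s : ℝ} (hs : 0 ≤ s) (hs2 : s ≤ 1 / 2) : |φ (1 - s)| = |φ s| := by
  rcases eq_or_lt_of_le hs with h0 | h0
  · rw [← h0]; norm_num
    rw [phi_one hε0 hε1 hφ, phi_zero hε0 hε1 hφ, abs_neg]
  rcases eq_or_lt_of_le hs2 with h1 | h1
  · rw [h1]; norm_num
  · rw [F3 hε0 hε1 hφ h0 h1, abs_neg]

lemma F6 {t : ℝ} (ht : 0 < t) (ht2 : t ≤ AA ε) :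
    Real.exp |φ t| = Real.exp (1 - ε) * (AA ε) ^ ε * t ^ (-ε) := by
  have hA0 := AA_pos hε0 hε1
  have hlog : Real.log t ≤ Real.log (AA ε) := Real.log_le_log ht ht2
  have habs : |φ t| = (1 - ε) + ε * Real.log (AA ε) - ε * Real.log t := by
    rw [F1 hε0 hε1 hφ ht ht2, abs_of_nonpos (by nlinarith)]
    ring
  rw [habs, show (1 - ε) + ε * Real.log (AA ε) - ε * Real.log t
      = (1 - ε) + ε * Real.log (AA ε) + (-ε) * Real.log t by ring,
    Real.exp_add, Real.exp_add, Real.rpow_def_of_pos hA0, Real.rpow_def_of_pos ht,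
    mul_comm (Real.log (AA ε)) ε, mul_comm (Real.log t) (-ε)]

lemma G1a : IntegrableOn φ (Ioc 0 (AA ε)) volume := by
  have hA0 := AA_pos hε0 hε1
  have hA2 := AA_lt_half hε0 hε1
  have h := (intervalIntegrable_iff_integrableOn_Ioc_of_le hA0.le).1
    (intInt_log le_rfl hA0.le (by linarith))
  have h1 : IntegrableOn (fun t => ε * Real.log t) (Ioc 0 (AA ε)) volume := h.const_mul ε
  have hc : IntegrableOn (fun _ : ℝ => ε * Real.log (AA ε) + (1 - ε)) (Ioc 0 (AA ε)) volume :=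
    integrableOn_const measure_Ioc_lt_top.ne
  have h3 := h1.sub hc
  refine IntegrableOn.congr_fun (h3 : IntegrableOn _ _ _) (fun t ht => ?_) measurableSet_Ioc
  simp only [Pi.sub_apply]
  rw [F1 hε0 hε1 hφ ht.1 ht.2]; ring

lemma G1b : IntegrableOn φ (Ioc (AA ε) (1/2)) volume := by
  have h2 : IntegrableOn (fun _ : ℝ => -(1 - ε)) (Ioc (AA ε) (1/2)) volume :=
    integrableOn_const measure_Ioc_lt_top.ne
  exact h2.congr_fun (fun t ht => (F2 hε0 hε1 hφ ht.1.le ht.2).symm) measurableSet_Ioc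

lemma II_phi_half : IntervalIntegrable φ volume 0 (1/2) := by
  have hA0 := AA_pos hε0 hε1
  have hA2 := AA_lt_half hε0 hε1
  rw [intervalIntegrable_iff_integrableOn_Ioc_of_le (by norm_num)]
  rw [show Ioc (0:ℝ) (1/2) = Ioc 0 (AA ε) ∪ Ioc (AA ε) (1/2) from
    (Ioc_union_Ioc_eq_Ioc hA0.le hA2.le).symm]
  exact (G1a hε0 hε1 hφ).union (G1b hε0 hε1 hφ)

lemma G1c : IntegrableOn φ (Ioc (1/2) 1) volume := by
  have h2 := (II_phi_half hε0 hε1 hφ).comp_sub_left 1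
  have h3 : IntervalIntegrable (fun x => -φ (1 - x)) volume (1/2) 1 := by
    have := h2.symm.neg
    norm_num at this ⊢
    exact this
  rw [intervalIntegrable_iff_integrableOn_Ioc_of_le (by norm_num)] at h3
  rw [integrableOn_Ioc_iff_integrableOn_Ioo]
  refine (h3.mono_set Ioo_subset_Ioc_self).congr_fun (fun t ht => ?_) measurableSet_Ioo
  have h4 : φ (1 - (1 - t)) = -φ (1 - t) := F3 hε0 hε1 hφ (by linarith [ht.2]) (by linarith [ht.1])
  rw [show 1 - (1 - t) = t by ring] at h4
  simp only [h4, neg_neg]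

lemma II_phi01 : IntervalIntegrable φ volume 0 1 := by
  rw [intervalIntegrable_iff_integrableOn_Ioc_of_le (by norm_num),
    show Ioc (0:ℝ) 1 = Ioc 0 (1/2) ∪ Ioc (1/2) 1 from
      (Ioc_union_Ioc_eq_Ioc (by norm_num) (by norm_num)).symm]
  refine IntegrableOn.union ?_ (G1c hε0 hε1 hφ)
  exact (intervalIntegrable_iff_integrableOn_Ioc_of_le (by norm_num)).1 (II_phi_half hε0 hε1 hφ)

lemma G2a : IntegrableOn (fun t => φ t ^ 2) (Ioc 0 (AA ε)) volume := by
  have hA0 := AA_pos hε0 hε1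
  have hA2 := AA_lt_half hε0 hε1
  set C := -(ε * Real.log (AA ε)) - (1 - ε) with hC
  have hsq := (intervalIntegrable_iff_integrableOn_Ioc_of_le hA0.le).1
    (intInt_logsq le_rfl hA0.le)
  have hlog := (intervalIntegrable_iff_integrableOn_Ioc_of_le hA0.le).1
    (intInt_log le_rfl hA0.le (by linarith))
  have h1 : IntegrableOn (fun t => ε^2 * (Real.log t)^2) (Ioc 0 (AA ε)) volume := hsq.const_mul _
  have h2 : IntegrableOn (fun t => (2*ε*C) * Real.log t) (Ioc 0 (AA ε)) volume := hlog.const_mul _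
  have hc : IntegrableOn (fun _ : ℝ => C^2) (Ioc 0 (AA ε)) volume :=
    integrableOn_const measure_Ioc_lt_top.ne
  have h3 := (h1.add h2).add hc
  refine IntegrableOn.congr_fun (h3 : IntegrableOn _ _ _) (fun t ht => ?_) measurableSet_Ioc
  simp only [Pi.add_apply]
  rw [F1 hε0 hε1 hφ ht.1 ht.2, hC]; ring

lemma G2b : IntegrableOn (fun t => φ t ^ 2) (Ioc (AA ε) (1/2)) volume := by
  have h2 : IntegrableOn (fun _ : ℝ => (1 - ε)^2) (Ioc (AA ε) (1/2)) volume :=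
    integrableOn_const measure_Ioc_lt_top.ne
  refine h2.congr_fun (fun t ht => ?_) measurableSet_Ioc
  rw [F2 hε0 hε1 hφ ht.1.le ht.2]; ring

lemma II_phisq_half : IntervalIntegrable (fun t => φ t ^ 2) volume 0 (1/2) := by
  have hA0 := AA_pos hε0 hε1
  have hA2 := AA_lt_half hε0 hε1
  rw [intervalIntegrable_iff_integrableOn_Ioc_of_le (by norm_num)]
  rw [show Ioc (0:ℝ) (1/2) = Ioc 0 (AA ε) ∪ Ioc (AA ε) (1/2) from
    (Ioc_union_Ioc_eq_Ioc hA0.le hA2.le).symm]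
  exact (G2a hε0 hε1 hφ).union (G2b hε0 hε1 hφ)

lemma G2c : IntegrableOn (fun t => φ t ^ 2) (Ioc (1/2) 1) volume := by
  have h2 := (II_phisq_half hε0 hε1 hφ).comp_sub_left 1
  have h3 : IntervalIntegrable (fun x => φ (1 - x) ^ 2) volume (1/2) 1 := by
    have := h2.symm
    norm_num at this ⊢
    exact this
  rw [intervalIntegrable_iff_integrableOn_Ioc_of_le (by norm_num)] at h3
  refine h3.congr_fun (fun t ht => ?_) measurableSet_Ioc
  have h4 := F4 hε0 hε1 hφ (show 0 ≤ 1 - t by linarith [ht.2]) (show 1 - t ≤ 1/2 by linarith [ht.1])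
  rw [show 1 - (1 - t) = t by ring] at h4
  exact h4.symm

lemma II_phisq01 : IntervalIntegrable (fun t => φ t ^ 2) volume 0 1 := by
  rw [intervalIntegrable_iff_integrableOn_Ioc_of_le (by norm_num),
    show Ioc (0:ℝ) 1 = Ioc 0 (1/2) ∪ Ioc (1/2) 1 from
      (Ioc_union_Ioc_eq_Ioc (by norm_num) (by norm_num)).symm]
  refine IntegrableOn.union ?_ (G2c hε0 hε1 hφ)
  exact (intervalIntegrable_iff_integrableOn_Ioc_of_le (by norm_num)).1
    (II_phisq_half hε0 hε1 hφ)

lemma G3a : IntegrableOn (fun t => Real.exp |φ t|) (Ioc 0 (AA ε)) volume := by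
  have hA0 := AA_pos hε0 hε1
  have hr : IntervalIntegrable (fun x : ℝ => x ^ (-ε)) volume 0 (AA ε) :=
    intervalIntegrable_rpow' (by linarith)
  rw [intervalIntegrable_iff_integrableOn_Ioc_of_le hA0.le] at hr
  have h1 : IntegrableOn (fun t : ℝ => (Real.exp (1-ε) * (AA ε) ^ ε) * t ^ (-ε))
      (Ioc 0 (AA ε)) volume := hr.const_mul _
  refine IntegrableOn.congr_fun h1 (fun t ht => ?_) measurableSet_Ioc
  rw [F6 hε0 hε1 hφ ht.1 ht.2]

lemma G3b : IntegrableOn (fun t => Real.exp |φ t|) (Ioc (AA ε) (1/2)) volume := by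
  have h2 : IntegrableOn (fun _ : ℝ => Real.exp (1 - ε)) (Ioc (AA ε) (1/2)) volume :=
    integrableOn_const measure_Ioc_lt_top.ne
  refine h2.congr_fun (fun t ht => ?_) measurableSet_Ioc
  rw [F2 hε0 hε1 hφ ht.1.le ht.2, abs_neg, abs_of_nonneg (by linarith : (0:ℝ) ≤ 1 - ε)]

lemma II_exp_half : IntervalIntegrable (fun t => Real.exp |φ t|) volume 0 (1/2) := by
  have hA0 := AA_pos hε0 hε1
  have hA2 := AA_lt_half hε0 hε1
  rw [intervalIntegrable_iff_integrableOn_Ioc_of_le (by norm_num)]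
  rw [show Ioc (0:ℝ) (1/2) = Ioc 0 (AA ε) ∪ Ioc (AA ε) (1/2) from
    (Ioc_union_Ioc_eq_Ioc hA0.le hA2.le).symm]
  exact (G3a hε0 hε1 hφ).union (G3b hε0 hε1 hφ)

lemma G3c : IntegrableOn (fun t => Real.exp |φ t|) (Ioc (1/2) 1) volume := by
  have h2 := (II_exp_half hε0 hε1 hφ).comp_sub_left 1
  have h3 : IntervalIntegrable (fun x => Real.exp |φ (1 - x)|) volume (1/2) 1 := by
    have := h2.symm
    norm_num at this ⊢
    exact this
  rw [intervalIntegrable_iff_integrableOn_Ioc_of_le (by norm_num)] at h3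
  refine h3.congr_fun (fun t ht => ?_) measurableSet_Ioc
  have h4 := F5 hε0 hε1 hφ (show 0 ≤ 1 - t by linarith [ht.2]) (show 1 - t ≤ 1/2 by linarith [ht.1])
  rw [show 1 - (1 - t) = t by ring] at h4
  rw [h4]

lemma II_exp01 : IntervalIntegrable (fun t => Real.exp |φ t|) volume 0 1 := by
  rw [intervalIntegrable_iff_integrableOn_Ioc_of_le (by norm_num),
    show Ioc (0:ℝ) 1 = Ioc 0 (1/2) ∪ Ioc (1/2) 1 from
      (Ioc_union_Ioc_eq_Ioc (by norm_num) (by norm_num)).symm]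
  refine IntegrableOn.union ?_ (G3c hε0 hε1 hφ)
  exact (intervalIntegrable_iff_integrableOn_Ioc_of_le (by norm_num)).1 (II_exp_half hε0 hε1 hφ)

-- interval integrability on subintervals of [0,1]
lemma II_phi {u v : ℝ} (hu : 0 ≤ u) (huv : u ≤ v) (hv : v ≤ 1) :
    IntervalIntegrable φ volume u v := by
  refine (II_phi01 hε0 hε1 hφ).mono_set ?_
  rw [uIcc_of_le (by norm_num : (0:ℝ) ≤ 1), uIcc_of_le huv]
  exact Icc_subset_Icc hu hv

lemma II_phisq {u v : ℝ} (hu : 0 ≤ u) (huv : u ≤ v) (hv : v ≤ 1) :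
    IntervalIntegrable (fun t => φ t ^ 2) volume u v := by
  refine (II_phisq01 hε0 hε1 hφ).mono_set ?_
  rw [uIcc_of_le (by norm_num : (0:ℝ) ≤ 1), uIcc_of_le huv]
  exact Icc_subset_Icc hu hv

omit hε0 hε1 hφ in
lemma ae_ne_half : ∀ᵐ x : ℝ ∂volume, x ≠ (1/2 : ℝ) := by
  rw [MeasureTheory.ae_iff]
  have h : {x : ℝ | ¬ x ≠ (1/2:ℝ)} = {(1/2 : ℝ)} := by ext x; simp
  rw [h]
  exact measure_singleton _

lemma refl_sq {d : ℝ} (hd : 1/2 ≤ d) (hd1 : d ≤ 1) :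
    ∫ t in (1/2)..d, φ t ^ 2 = ∫ t in (1-d)..(1/2), φ t ^ 2 := by
  have h := integral_comp_sub_left (a := 1-d) (b := 1/2) (fun t => φ t ^ 2) 1
  rw [show (1:ℝ) - 1/2 = 1/2 by norm_num, show (1:ℝ) - (1 - d) = d by ring] at h
  rw [← h]
  refine integral_congr fun t ht => ?_
  rw [uIcc_of_le (by linarith : 1 - d ≤ 1/2)] at ht
  exact F4 hε0 hε1 hφ (by linarith [ht.1]) ht.2

lemma refl_exp {d : ℝ} (hd : 1/2 ≤ d) (hd1 : d ≤ 1) :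
    ∫ t in (1/2)..d, Real.exp |φ t| = ∫ t in (1-d)..(1/2), Real.exp |φ t| := by
  have h := integral_comp_sub_left (a := 1-d) (b := 1/2) (fun t => Real.exp |φ t|) 1
  rw [show (1:ℝ) - 1/2 = 1/2 by norm_num, show (1:ℝ) - (1 - d) = d by ring] at h
  rw [← h]
  refine integral_congr fun t ht => ?_
  rw [uIcc_of_le (by linarith : 1 - d ≤ 1/2)] at ht
  rw [F5 hε0 hε1 hφ (by linarith [ht.1]) ht.2]

lemma refl_phi {d : ℝ} (hd : 1/2 ≤ d) (hd1 : d ≤ 1) :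
    ∫ t in (1/2)..d, φ t = - ∫ t in (1-d)..(1/2), φ t := by
  have h := integral_comp_sub_left (a := 1-d) (b := 1/2) (fun t => φ t) 1
  rw [show (1:ℝ) - 1/2 = 1/2 by norm_num, show (1:ℝ) - (1 - d) = d by ring] at h
  rw [← h, ← intervalIntegral.integral_neg]
  refine intervalIntegral.integral_congr_ae ?_
  filter_upwards [ae_ne_half] with x hx hmem
  rw [uIoc_of_le (by linarith : 1 - d ≤ 1/2)] at hmem
  exact F3 hε0 hε1 hφ (lt_of_le_of_lt (by linarith) hmem.1)
    (lt_of_le_of_ne hmem.2 hx)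

lemma int_phi_01 : ∫ t in (0:ℝ)..1, φ t = 0 := by
  rw [← integral_add_adjacent_intervals (a := (0:ℝ)) (b := 1/2) (c := 1)
    (II_phi hε0 hε1 hφ le_rfl (by norm_num) (by norm_num))
    (II_phi hε0 hε1 hφ (by norm_num) (by norm_num) le_rfl)]
  have h := refl_phi hε0 hε1 hφ (by norm_num : (1:ℝ)/2 ≤ 1) le_rfl
  rw [show (1:ℝ) - 1 = 0 by ring] at h
  rw [h]
  ring

lemma int_A_half : ∫ t in (AA ε)..(1/2), φ t ^ 2 = (1-ε)^2 * (1/2 - AA ε) := by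
  have hA2 := AA_lt_half hε0 hε1
  rw [integral_congr (g := fun _ : ℝ => (1-ε)^2) (fun t ht => by
    rw [uIcc_of_le hA2.le] at ht
    rw [F2 hε0 hε1 hφ ht.1 ht.2]; ring)]
  rw [intervalIntegral.integral_const, smul_eq_mul, mul_comm]

lemma H1 {c : ℝ} (hc : 0 ≤ c) (hc2 : c ≤ AA ε) :
    ∫ t in c..(1/2), φ t ^ 2
      = ε^2 * (1/2 - c) - c * (ε * (Real.log c - Real.log (AA ε)) - 1)^2 := by
  have hA0 := AA_pos hε0 hε1
  have hA2 := AA_lt_half hε0 hε1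
  have hA1 : AA ε ≤ 1 := by linarith
  set C : ℝ := -(ε * Real.log (AA ε)) - (1 - ε) with hC
  have hsplit := integral_add_adjacent_intervals (a := c) (b := AA ε) (c := 1/2)
    (II_phisq hε0 hε1 hφ hc hc2 hA1)
    (II_phisq hε0 hε1 hφ hA0.le hA2.le (by norm_num))
  have e1 : ∫ t in c..(AA ε), φ t ^ 2
      = ε^2 * (Alog2 (AA ε) - Alog2 c) + (2*ε*C) * (Alog (AA ε) - Alog c)
        + C^2 * (AA ε - c) := by
    rw [intervalIntegral.integral_congr_ae (g := fun t =>
        ε^2 * (Real.log t)^2 + ((2*ε*C) * Real.log t + C^2)) ?_]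
    · rw [intervalIntegral.integral_add ((intInt_logsq hc hc2).const_mul _)
        (((intInt_log hc hc2 hA1).const_mul _).add intervalIntegrable_const),
        intervalIntegral.integral_add ((intInt_log hc hc2 hA1).const_mul _)
          intervalIntegrable_const,
        intervalIntegral.integral_const_mul, intervalIntegral.integral_const_mul,
        intval_log hc hc2 hA1, intval_logsq hc hc2, intervalIntegral.integral_const,
        smul_eq_mul]
      ring
    · refine Filter.Eventually.of_forall fun t ht => ?_
      rw [uIoc_of_le hc2] at ht
      rw [F1 hε0 hε1 hφ (lt_of_le_of_lt hc ht.1) ht.2, hC]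
      ring
  rw [← hsplit, e1, int_A_half hε0 hε1 hφ, Alog_eq, Alog_eq, Alog2_eq2 hA0.le,
    Alog2_eq2 hc, hC]
  rw [show AA ε = (2*ε-1)/(4*ε) from rfl]
  have h4 : (4:ℝ) * ε ≠ 0 := by positivity
  field_simp
  ring

lemma H2 {c : ℝ} (hc : 0 ≤ c) (hc2 : c ≤ 1/2) :
    ∫ t in c..(1/2), φ t ^ 2 ≤ ε^2 * (1/2 - c) := by
  rcases le_or_gt c (AA ε) with h | h
  · rw [H1 hε0 hε1 hφ hc h]
    have h2 := mul_nonneg hc (sq_nonneg (ε * (Real.log c - Real.log (AA ε)) - 1))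
    linarith
  · rw [integral_congr (g := fun _ : ℝ => (1-ε)^2) (fun t ht => by
      rw [uIcc_of_le hc2] at ht
      rw [F2 hε0 hε1 hφ (le_trans h.le ht.1) ht.2]; ring)]
    rw [intervalIntegral.integral_const, smul_eq_mul]
    have h3 : (1-ε)^2 ≤ ε^2 := by nlinarith
    nlinarith

lemma int_phisq_half : ∫ t in (0:ℝ)..(1/2), φ t ^ 2 = ε^2 / 2 := by
  have h := H1 hε0 hε1 hφ le_rfl (AA_pos hε0 hε1).le
  rw [h]
  simp
  ring

lemma int_phisq_01 : ∫ t in (0:ℝ)..1, φ t ^ 2 = ε^2 := by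
  rw [← integral_add_adjacent_intervals (a := (0:ℝ)) (b := 1/2) (c := 1)
    (II_phisq hε0 hε1 hφ le_rfl (by norm_num) (by norm_num))
    (II_phisq hε0 hε1 hφ (by norm_num) (by norm_num) le_rfl)]
  have h := refl_sq hε0 hε1 hφ (by norm_num : (1:ℝ)/2 ≤ 1) le_rfl
  rw [show (1:ℝ) - 1 = 0 by ring] at h
  rw [h, int_phisq_half hε0 hε1 hφ]
  ring

lemma int_exp_A : ∫ t in (0:ℝ)..(AA ε), Real.exp |φ t|
    = Real.exp (1-ε) * (AA ε) / (1 - ε) := by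
  have hA0 := AA_pos hε0 hε1
  have h1 : ∫ t in (0:ℝ)..(AA ε), Real.exp |φ t|
      = ∫ t in (0:ℝ)..(AA ε), (Real.exp (1-ε) * (AA ε) ^ ε) * t ^ (-ε) := by
    refine intervalIntegral.integral_congr_ae (Filter.Eventually.of_forall fun t ht => ?_)
    rw [uIoc_of_le hA0.le] at ht
    rw [F6 hε0 hε1 hφ ht.1 ht.2]
  rw [h1, intervalIntegral.integral_const_mul, integral_rpow (Or.inl (by linarith))]
  rw [Real.zero_rpow (by linarith : -ε + 1 ≠ 0), sub_zero]
  have h7 := Real.rpow_add hA0 ε (-ε + 1)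
  rw [show ε + (-ε+1) = 1 by ring, Real.rpow_one] at h7
  rw [show Real.exp (1-ε) * AA ε ^ ε * (AA ε ^ (-ε+1) / (-ε+1))
      = Real.exp (1-ε) * (AA ε ^ ε * AA ε ^ (-ε+1)) / (-ε+1) by ring, ← h7,
    show -ε + 1 = 1 - ε by ring]

lemma int_exp_half : ∫ t in (0:ℝ)..(1/2), Real.exp |φ t|
    = Real.exp (1-ε) * (AA ε / (1 - ε) + (1/2 - AA ε)) := by
  have hA0 := AA_pos hε0 hε1
  have hA2 := AA_lt_half hε0 hε1
  have hsplit := integral_add_adjacent_intervals (a := (0:ℝ)) (b := AA ε) (c := 1/2)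
    ((intervalIntegrable_iff_integrableOn_Ioc_of_le hA0.le).2 (G3a hε0 hε1 hφ))
    ((intervalIntegrable_iff_integrableOn_Ioc_of_le hA2.le).2 (G3b hε0 hε1 hφ))
  have e2 : ∫ t in (AA ε)..(1/2), Real.exp |φ t| = Real.exp (1-ε) * (1/2 - AA ε) := by
    rw [integral_congr (g := fun _ : ℝ => Real.exp (1-ε)) (fun t ht => by
      rw [uIcc_of_le hA2.le] at ht
      rw [F2 hε0 hε1 hφ ht.1 ht.2, abs_neg, abs_of_nonneg (by linarith : (0:ℝ) ≤ 1-ε)])]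
    rw [intervalIntegral.integral_const, smul_eq_mul, mul_comm]
  rw [← hsplit, e2, int_exp_A hε0 hε1 hφ]
  field_simp

lemma int_exp_01 : ∫ t in (0:ℝ)..1, Real.exp |φ t| = Real.exp (1-ε) / (2 - 2*ε) := by
  rw [← integral_add_adjacent_intervals (a := (0:ℝ)) (b := 1/2) (c := 1)
    (II_exp_half hε0 hε1 hφ)
    (((II_exp01 hε0 hε1 hφ)).mono_set (by
      rw [uIcc_of_le (by norm_num : (0:ℝ) ≤ 1), uIcc_of_le (by norm_num : (1:ℝ)/2 ≤ 1)]
      exact Icc_subset_Icc (by norm_num) le_rfl))]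
  have h := refl_exp hε0 hε1 hφ (by norm_num : (1:ℝ)/2 ≤ 1) le_rfl
  rw [show (1:ℝ) - 1 = 0 by ring] at h
  rw [h, int_exp_half hε0 hε1 hφ]
  rw [show AA ε = (2*ε-1)/(4*ε) from rfl]
  have h4 : (4:ℝ) * ε ≠ 0 := by positivity
  have h5 : (1:ℝ) - ε ≠ 0 := by linarith
  have h6 : (2:ℝ) - 2*ε ≠ 0 := by linarith
  field_simp
  ring

omit hε0 hε1 hφ in
lemma ae_ne_zero : ∀ᵐ x : ℝ ∂volume, x ≠ (0 : ℝ) := by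
  rw [MeasureTheory.ae_iff]
  have h : {x : ℝ | ¬ x ≠ (0:ℝ)} = {(0 : ℝ)} := by ext x; simp
  rw [h]
  exact measure_singleton _

lemma Fmin {t : ℝ} (ht : 0 < t) (ht2 : t ≤ 1/2) :
    φ t = min (ε * Real.log t - ε * Real.log (AA ε)) 0 - (1 - ε) := by
  have hA0 := AA_pos hε0 hε1
  rcases le_or_gt t (AA ε) with h | h
  · rw [F1 hε0 hε1 hφ ht h]
    have hl : Real.log t ≤ Real.log (AA ε) := Real.log_le_log ht h
    rw [min_eq_left (by nlinarith)]
  · rw [F2 hε0 hε1 hφ h.le ht2]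
    have hl : Real.log (AA ε) ≤ Real.log t := Real.log_le_log hA0 h.le
    rw [min_eq_right (by nlinarith)]
    ring

lemma var_left {c d : ℝ} (hc : 0 ≤ c) (hcd : c < d) (hd : d ≤ 1/2) :
    intervalAvg c d (fun t => (φ t - intervalAvg c d φ) ^ 2) ≤ ε ^ 2 := by
  have hd1 : d ≤ 1 := by linarith
  have hdc : 0 < d - c := by linarith
  have hεp : (0:ℝ) < ε := by linarith
  have hIφ := II_phi hε0 hε1 hφ hc hcd.le hd1
  have hIφ2 := II_phisq hε0 hε1 hφ hc hcd.le hd1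
  set μ := intervalAvg c d Real.log with hμ
  set m := min (ε * μ - ε * Real.log (AA ε)) 0 - (1 - ε) with hm
  have step1 := var_le hcd φ hIφ hIφ2 m
  have hIls : IntervalIntegrable (fun t => (ε * Real.log t - ε * μ) ^ 2) volume c d := by
    have he : (fun t => (ε * Real.log t - ε * μ) ^ 2)
        = fun t => ε^2 * (Real.log t)^2 + ((-2*ε^2*μ) * Real.log t + ε^2*μ^2) := by
      funext t; ring
    rw [he]
    exact ((intInt_logsq hc hcd.le).const_mul _).add
      (((intInt_log hc hcd.le hd1).const_mul _).add intervalIntegrable_const)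
  have hIφm : IntervalIntegrable (fun t => (φ t - m) ^ 2) volume c d := by
    have he : (fun t => (φ t - m) ^ 2)
        = fun t => φ t ^ 2 + ((-2*m) * φ t + m^2) := by funext t; ring
    rw [he]
    exact hIφ2.add ((hIφ.const_mul _).add intervalIntegrable_const)
  have step2 : intervalAvg c d (fun t => (φ t - m) ^ 2)
      ≤ intervalAvg c d (fun t => (ε * Real.log t - ε * μ) ^ 2) := by
    rw [intervalAvg, intervalAvg]
    refine mul_le_mul_of_nonneg_left ?_ (inv_nonneg.2 hdc.le)
    refine intervalIntegral.integral_mono_ae_restrict hcd.le hIφm hIls ?_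
    rw [Filter.EventuallyLE, MeasureTheory.ae_restrict_iff' measurableSet_Icc]
    filter_upwards [ae_ne_zero] with x hx hmem
    have hx0 : 0 < x := lt_of_le_of_ne (hc.trans hmem.1) (Ne.symm hx)
    have hx2 : x ≤ 1/2 := hmem.2.trans hd
    have habs : |φ x - m| ≤ |ε * Real.log x - ε * μ| := by
      rw [Fmin hε0 hε1 hφ hx0 hx2, hm]
      have h5 := min_lipschitz (ε * Real.log x - ε * Real.log (AA ε))
        (ε * μ - ε * Real.log (AA ε)) 0
      calc |min (ε * Real.log x - ε * Real.log (AA ε)) 0 - (1 - ε)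
          - (min (ε * μ - ε * Real.log (AA ε)) 0 - (1 - ε))|
          = |min (ε * Real.log x - ε * Real.log (AA ε)) 0
            - min (ε * μ - ε * Real.log (AA ε)) 0| := by ring_nf
        _ ≤ |ε * Real.log x - ε * Real.log (AA ε) - (ε * μ - ε * Real.log (AA ε))| := h5
        _ = |ε * Real.log x - ε * μ| := by ring_nf
    calc (φ x - m) ^ 2 = |φ x - m| ^ 2 := (sq_abs _).symm
      _ ≤ |ε * Real.log x - ε * μ| ^ 2 := by
          exact pow_le_pow_left₀ (abs_nonneg _) habs 2
      _ = (ε * Real.log x - ε * μ) ^ 2 := sq_abs _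
  have step3 : intervalAvg c d (fun t => (ε * Real.log t - ε * μ) ^ 2) ≤ ε ^ 2 := by
    have hIl : IntervalIntegrable (fun t => ε * Real.log t) volume c d :=
      (intInt_log hc hcd.le hd1).const_mul _
    have hIl2 : IntervalIntegrable (fun t => (ε * Real.log t) ^ 2) volume c d := by
      have he : (fun t => (ε * Real.log t) ^ 2) = fun t => ε^2 * (Real.log t)^2 := by
        funext t; ring
      rw [he]; exact (intInt_logsq hc hcd.le).const_mul _
    have havg : intervalAvg c d (fun t => ε * Real.log t) = ε * μ := by
      rw [intervalAvg, intervalIntegral.integral_const_mul, hμ, intervalAvg]; ring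
    have h6 := avg_expand hcd (fun t => ε * Real.log t) hIl hIl2 (ε * μ)
    rw [havg] at h6
    have he2 : (fun t => (ε * Real.log t - ε * μ) ^ 2) = fun t => ((fun s => ε * Real.log s) t - ε * μ) ^ 2 := rfl
    rw [he2, h6]
    have havg2 : intervalAvg c d (fun t => (ε * Real.log t) ^ 2)
        = ε^2 * ((d - c)⁻¹ * ∫ t in c..d, (Real.log t)^2) := by
      have he : (fun t => (ε * Real.log t) ^ 2) = fun t => ε^2 * (Real.log t)^2 := by
        funext t; ring
      rw [intervalAvg, he, intervalIntegral.integral_const_mul]; ring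
    rw [havg2, hμ, intervalAvg]
    have hvl := var_log hc hcd hd1
    have key : (d - c)⁻¹ * (∫ t in c..d, (Real.log t)^2)
        - ((d - c)⁻¹ * ∫ t in c..d, Real.log t)^2 ≤ 1 := by
      have h8 : (d - c)⁻¹ * (∫ t in c..d, (Real.log t)^2)
          - ((d - c)⁻¹ * ∫ t in c..d, Real.log t)^2
          = ((d - c) * (∫ t in c..d, (Real.log t)^2)
            - (∫ t in c..d, Real.log t)^2) / (d - c)^2 := by
        field_simp
      rw [h8]
      exact (div_le_one (by positivity)).2 hvl
    nlinarith [mul_le_mul_of_nonneg_left key (sq_nonneg ε)]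
  exact step1.trans (step2.trans step3)

lemma var_right {c d : ℝ} (hc : 1/2 ≤ c) (hcd : c < d) (hd : d ≤ 1) :
    intervalAvg c d (fun t => (φ t - intervalAvg c d φ) ^ 2) ≤ ε ^ 2 := by
  have hl : (1:ℝ) - d ≤ 1 - c := by linarith
  have h1 : ∫ x in (1-d)..(1-c), φ x = - ∫ t in c..d, φ t := by
    have h := integral_comp_sub_left (a := 1-d) (b := 1-c) (fun t => φ t) 1
    rw [show (1:ℝ) - (1-c) = c by ring, show (1:ℝ) - (1-d) = d by ring] at h
    rw [← h, ← intervalIntegral.integral_neg]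
    refine intervalIntegral.integral_congr_ae ?_
    filter_upwards [ae_ne_half] with x hx hmem
    rw [uIoc_of_le hl] at hmem
    have h0x : 0 < x := lt_of_le_of_lt (by linarith : (0:ℝ) ≤ 1 - d) hmem.1
    have hx2 : x < 1/2 := lt_of_le_of_ne (le_trans hmem.2 (by linarith)) hx
    rw [F3 hε0 hε1 hφ h0x hx2, neg_neg]
  have h2 : ∫ x in (1-d)..(1-c), (φ x - - intervalAvg c d φ) ^ 2
      = ∫ t in c..d, (φ t - intervalAvg c d φ) ^ 2 := by
    have h := integral_comp_sub_left (a := 1-d) (b := 1-c)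
      (fun t => (φ t - intervalAvg c d φ) ^ 2) 1
    rw [show (1:ℝ) - (1-c) = c by ring, show (1:ℝ) - (1-d) = d by ring] at h
    rw [← h]
    refine intervalIntegral.integral_congr_ae ?_
    filter_upwards [ae_ne_half] with x hx hmem
    rw [uIoc_of_le hl] at hmem
    have h0x : 0 < x := lt_of_le_of_lt (by linarith : (0:ℝ) ≤ 1 - d) hmem.1
    have hx2 : x < 1/2 := lt_of_le_of_ne (le_trans hmem.2 (by linarith)) hx
    rw [F3 hε0 hε1 hφ h0x hx2]
    ring
  have hν : intervalAvg (1-d) (1-c) φ = - intervalAvg c d φ := by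
    rw [intervalAvg, intervalAvg, h1, show (1:ℝ)-c-(1-d) = d - c by ring]
    ring
  have hfinal := var_left hε0 hε1 hφ (show (0:ℝ) ≤ 1-d by linarith)
    (show 1-d < 1-c by linarith) (show 1-c ≤ 1/2 by linarith)
  rw [hν] at hfinal
  rw [intervalAvg] at hfinal ⊢
  rw [show (1:ℝ)-c-(1-d) = d - c by ring, h2] at hfinal
  exact hfinal

lemma var_mid {c d : ℝ} (hc : 0 ≤ c) (h1 : c < 1/2) (h2 : 1/2 < d) (hd : d ≤ 1) :
    intervalAvg c d (fun t => (φ t - intervalAvg c d φ) ^ 2) ≤ ε ^ 2 := by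
  have hcd : c < d := by linarith
  have hIφ := II_phi hε0 hε1 hφ hc hcd.le hd
  have hIφ2 := II_phisq hε0 hε1 hφ hc hcd.le hd
  have step1 := var_le hcd φ hIφ hIφ2 0
  have he : (fun t => (φ t - (0:ℝ)) ^ 2) = fun t => φ t ^ 2 := by funext t; ring
  rw [he] at step1
  refine step1.trans ?_
  rw [intervalAvg]
  rw [← integral_add_adjacent_intervals (a := c) (b := 1/2) (c := d)
    (II_phisq hε0 hε1 hφ hc h1.le (by norm_num))
    (II_phisq hε0 hε1 hφ (by norm_num) h2.le hd)]
  have b1 := H2 hε0 hε1 hφ hc h1.le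
  have b2 : ∫ t in (1/2)..d, φ t ^ 2 ≤ ε^2 * (d - 1/2) := by
    rw [refl_sq hε0 hε1 hφ h2.le hd]
    have h3 := H2 hε0 hε1 hφ (show (0:ℝ) ≤ 1-d by linarith) (show 1-d ≤ 1/2 by linarith)
    have h4 : ε^2 * (1/2 - (1-d)) = ε^2 * (d - 1/2) := by ring
    linarith [h3, h4.le]
  have hdc : 0 < d - c := by linarith
  calc (d-c)⁻¹ * ((∫ t in c..(1/2), φ t ^ 2) + ∫ t in (1/2)..d, φ t ^ 2)
      ≤ (d-c)⁻¹ * (ε^2 * (d-c)) := by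
        refine mul_le_mul_of_nonneg_left ?_ (inv_nonneg.2 hdc.le)
        nlinarith [b1, b2]
    _ = ε^2 := by field_simp

end Main

/-- The explicit optimizer at the point `(0, ε²)` for `ε ∈ (1/2, 1)`. -/
theorem optimizer_at_top_large_eps (ε : ℝ) (hε0 : 1 / 2 < ε) (hε1 : ε < 1)
    (φ : ℝ → ℝ)
    (hφ : ∀ t : ℝ, φ t =
      if t ≤ (2 * ε - 1) / (4 * ε) then
        -ε * Real.log ((2 * ε - 1) / (4 * ε * t)) - 1 + ε
      else if t ≤ 1 / 2 then -1 + ε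
      else if t ≤ (2 * ε + 1) / (4 * ε) then 1 - ε
      else ε * Real.log ((2 * ε - 1) / (4 * ε * (1 - t))) + 1 - ε) :
    MemBMO ε 0 1 φ ∧
      intervalAvg 0 1 φ = 0 ∧ intervalAvg 0 1 (fun t => (φ t) ^ 2) = ε ^ 2 ∧
      intervalAvg 0 1 (fun t => Real.exp |φ t|) = Real.exp (1 - ε) / (2 - 2 * ε) := by
  refine ⟨⟨?_, ?_, ?_⟩, ?_, ?_, ?_⟩
  · rw [integrableOn_Icc_iff_integrableOn_Ioc]
    exact (intervalIntegrable_iff_integrableOn_Ioc_of_le (by norm_num)).1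
      (II_phi01 hε0 hε1 hφ)
  · rw [integrableOn_Icc_iff_integrableOn_Ioc]
    exact (intervalIntegrable_iff_integrableOn_Ioc_of_le (by norm_num)).1
      (II_phisq01 hε0 hε1 hφ)
  · intro c d hc hcd hd
    rcases le_or_gt d (1/2) with h | h
    · exact var_left hε0 hε1 hφ hc hcd h
    · rcases le_or_gt (1/2) c with h2 | h2
      · exact var_right hε0 hε1 hφ h2 hcd hd
      · exact var_mid hε0 hε1 hφ hc h2 h hd
  · rw [intervalAvg, int_phi_01 hε0 hε1 hφ]; norm_num
  · rw [intervalAvg, int_phisq_01 hε0 hε1 hφ]; norm_num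
  · rw [intervalAvg, int_exp_01 hε0 hε1 hφ]; norm_num
end
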